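/- arXiv:0712.4092 — 7 statements merged into one kernel-verified Lean document; each statement's English description precedes it below -/
import Mathlib

section
/- Let (Ω, μ) be a probability space, N a Young function, and f a function with finite Orlicz norm ‖f − E_μ f‖_{N(μ)}. Then (1/2)·‖f − E_μ f‖_{N(μ)} ≤ ‖f − M_μ f‖_{N(μ)} ≤ 3·‖f − E_μ f‖_{N(μ)}, where M_μ f is any median of f. -/
open MeasureTheory

/-- The Orlicz (Luxemburg) norm associated to a Young function `N`. -/
noncomputable def orliczNorm {Ω : Type*} [MeasurableSpace Ω] (μ : Measure Ω)
    (N : ℝ → ℝ) (g : Ω → ℝ) : ℝ :=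
  sInf {v : ℝ | 0 < v ∧ ∫ x, N (|g x| / v) ∂μ ≤ 1}

section AuxOrlicz

variable {Ω : Type*} [MeasurableSpace Ω] {μ : Measure Ω} {N : ℝ → ℝ}

private lemma aux_aesm (hmono : MonotoneOn N (Set.Ici 0)) {g : Ω → ℝ}
    (hg : AEStronglyMeasurable g μ) {v : ℝ} (hv : 0 < v) :
    AEStronglyMeasurable (fun x => N (|g x| / v)) μ := by
  have hM : Monotone (fun t => N (max t 0)) := fun a b hab =>
    hmono (Set.mem_Ici.2 (le_max_right a 0)) (Set.mem_Ici.2 (le_max_right b 0))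
      (max_le_max hab le_rfl)
  have h1 : AEMeasurable (fun x => |g x| / v) μ := by
    simpa [Real.norm_eq_abs] using hg.aemeasurable.norm.div_const v
  have h2 : AEMeasurable (fun x => N (max (|g x| / v) 0)) μ :=
    hM.measurable.comp_aemeasurable h1
  have heq : (fun x => N (|g x| / v)) = fun x => N (max (|g x| / v) 0) := by
    funext x; rw [max_eq_left (div_nonneg (abs_nonneg _) hv.le)]
  rw [heq]; exact h2.aestronglyMeasurable

private lemma aux_pt (hconv : ConvexOn ℝ (Set.Ici 0) N) (hmono : MonotoneOn N (Set.Ici 0))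
    {a b c w u : ℝ} (ha : 0 ≤ a) (hb : 0 ≤ b) (hc : 0 ≤ c) (hw : 0 < w) (hu : 0 < u)
    (hab : a ≤ b + c) :
    N (a / (w + u)) ≤ (w / (w + u)) * N (b / w) + (u / (w + u)) * N (c / u) := by
  have hwu : 0 < w + u := by linarith
  have key : a / (w + u) ≤ (w / (w + u)) * (b / w) + (u / (w + u)) * (c / u) := by
    have h1 : (w / (w + u)) * (b / w) = b / (w + u) := by
      field_simp
    have h2 : (u / (w + u)) * (c / u) = c / (w + u) := by
      field_simp
    rw [h1, h2, ← add_div]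
    gcongr
  have hcomb : (0:ℝ) ≤ (w / (w + u)) * (b / w) + (u / (w + u)) * (c / u) := by positivity
  have h1 : N (a / (w + u)) ≤ N ((w / (w + u)) * (b / w) + (u / (w + u)) * (c / u)) :=
    hmono (Set.mem_Ici.2 (div_nonneg ha hwu.le)) (Set.mem_Ici.2 hcomb) key
  have h2 := hconv.2 (Set.mem_Ici.2 (div_nonneg hb hw.le)) (Set.mem_Ici.2 (div_nonneg hc hu.le))
    (le_of_lt (div_pos hw hwu)) (le_of_lt (div_pos hu hwu))
    (by field_simp)
  simp only [smul_eq_mul] at h2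
  exact h1.trans h2

private lemma aux_transfer [IsProbabilityMeasure μ]
    (hconv : ConvexOn ℝ (Set.Ici 0) N) (hmono : MonotoneOn N (Set.Ici 0))
    (hNnn : ∀ t, 0 ≤ t → 0 ≤ N t)
    {g h : Ω → ℝ} {c w u : ℝ}
    (hc : 0 ≤ c) (hw : 0 < w) (hu : 0 < u)
    (hgh : ∀ x, |h x| ≤ |g x| + c)
    (hH : AEStronglyMeasurable (fun x => N (|h x| / (w + u))) μ)
    (hG : Integrable (fun x => N (|g x| / w)) μ) :
    Integrable (fun x => N (|h x| / (w + u))) μ ∧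
      ∫ x, N (|h x| / (w + u)) ∂μ ≤
        (w / (w + u)) * ∫ x, N (|g x| / w) ∂μ + (u / (w + u)) * N (c / u) := by
  have hwu : 0 < w + u := by linarith
  have hB : Integrable (fun x => (w / (w + u)) * N (|g x| / w) + (u / (w + u)) * N (c / u)) μ :=
    (hG.const_mul _).add (integrable_const _)
  have hptx : ∀ x, N (|h x| / (w + u)) ≤
      (w / (w + u)) * N (|g x| / w) + (u / (w + u)) * N (c / u) :=
    fun x => aux_pt hconv hmono (abs_nonneg _) (abs_nonneg _) hc hw hu (hgh x)
  have hnn : ∀ x, 0 ≤ N (|h x| / (w + u)) :=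
    fun x => hNnn _ (div_nonneg (abs_nonneg _) hwu.le)
  have hint : Integrable (fun x => N (|h x| / (w + u))) μ := by
    refine hB.mono' hH (ae_of_all _ fun x => ?_)
    rw [Real.norm_eq_abs, abs_of_nonneg (hnn x)]
    exact hptx x
  refine ⟨hint, ?_⟩
  calc ∫ x, N (|h x| / (w + u)) ∂μ
      ≤ ∫ x, ((w / (w + u)) * N (|g x| / w) + (u / (w + u)) * N (c / u)) ∂μ :=
        integral_mono_ae hint hB (ae_of_all _ hptx)
    _ = (w / (w + u)) * ∫ x, N (|g x| / w) ∂μ + (u / (w + u)) * N (c / u) := by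
        rw [integral_add (hG.const_mul _) (integrable_const _), integral_const_mul,
          integral_const, probReal_univ]
        simp

private lemma aux_cont (hN0 : N 0 = 0) (hNnn : ∀ t, 0 ≤ t → 0 ≤ N t)
    (hconv : ConvexOn ℝ (Set.Ici 0) N) : ContinuousOn N (Set.Ici 0) := by
  intro x hx
  rcases eq_or_lt_of_le (Set.mem_Ici.1 hx) with h0 | hpos
  · have hx0 : x = 0 := h0.symm
    subst hx0
    have hbound : ∀ᶠ t in nhdsWithin 0 (Set.Ici 0), N t ≤ t * N 1 := by
      have h1 : ∀ᶠ t in nhdsWithin (0:ℝ) (Set.Ici 0), t ≤ 1 :=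
        eventually_nhdsWithin_of_eventually_nhds (eventually_le_nhds one_pos)
      filter_upwards [h1, self_mem_nhdsWithin] with t ht1 ht0
      have := hconv.2 (Set.mem_Ici.2 (zero_le_one (α := ℝ))) (Set.mem_Ici.2 (le_refl (0:ℝ)))
        (Set.mem_Ici.1 ht0) (show (0:ℝ) ≤ 1 - t by linarith) (show t + (1 - t) = 1 by ring)
      simpa [hN0, smul_eq_mul] using this
    have hnn : ∀ᶠ t in nhdsWithin (0:ℝ) (Set.Ici 0), 0 ≤ N t := by
      filter_upwards [self_mem_nhdsWithin] with t ht
      exact hNnn t ht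
    have htend : Filter.Tendsto (fun t : ℝ => t * N 1) (nhdsWithin 0 (Set.Ici 0)) (nhds 0) := by
      have h := ((continuous_id.mul (continuous_const (y := N 1))).tendsto (0:ℝ)).mono_left
        (nhdsWithin_le_nhds (s := Set.Ici 0))
      simpa [Pi.mul_def] using h
    have := squeeze_zero' hnn hbound htend
    unfold ContinuousWithinAt
    rw [hN0]
    exact this
  · have hcont : ContinuousOn N (Set.Ioi 0) :=
      (hconv.subset Set.Ioi_subset_Ici_self (convex_Ioi 0)).continuousOn isOpen_Ioi
    exact ((hcont.continuousAt (Ioi_mem_nhds hpos)).continuousWithinAt)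

private lemma aux_jensen [IsProbabilityMeasure μ]
    (hNcont : ContinuousOn N (Set.Ici 0)) (hconv : ConvexOn ℝ (Set.Ici 0) N)
    (hmono : MonotoneOn N (Set.Ici 0))
    {f : Ω → ℝ} (hf : Integrable f μ) {m w : ℝ} (hw : 0 < w)
    (hHint : Integrable (fun x => N (|f x - m| / w)) μ)
    (hH1 : ∫ x, N (|f x - m| / w) ∂μ ≤ 1) :
    N (|(∫ y, f y ∂μ) - m| / w) ≤ 1 := by
  have hφint : Integrable (fun x => |f x - m| / w) μ :=
    ((hf.sub (integrable_const m)).abs).div_const w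
  have hjen : N (∫ x, |f x - m| / w ∂μ) ≤ ∫ x, N (|f x - m| / w) ∂μ := by
    refine hconv.map_integral_le hNcont isClosed_Ici ?_ hφint ?_
    · exact ae_of_all _ fun x => Set.mem_Ici.2 (by positivity)
    · exact hHint
  have h1 : |(∫ y, f y ∂μ) - m| ≤ ∫ x, |f x - m| ∂μ := by
    have h := norm_integral_le_integral_norm (μ := μ) (f := fun x => f x - m)
    rw [integral_sub hf (integrable_const m), integral_const, probReal_univ] at h
    simpa [Real.norm_eq_abs] using h
  have h2 : ∫ x, |f x - m| / w ∂μ = (∫ x, |f x - m| ∂μ) / w := integral_div w _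
  have hmm : N (|(∫ y, f y ∂μ) - m| / w) ≤ N (∫ x, |f x - m| / w ∂μ) := by
    refine hmono (Set.mem_Ici.2 (by positivity)) (Set.mem_Ici.2 ?_) ?_
    · exact integral_nonneg fun x => by positivity
    · rw [h2]; gcongr
  exact hmm.trans (hjen.trans hH1)

private lemma aux_cheb [IsProbabilityMeasure μ]
    (hN0 : N 0 = 0) (hNnn : ∀ t, 0 ≤ t → 0 ≤ N t)
    (hconv : ConvexOn ℝ (Set.Ici 0) N) (hmono : MonotoneOn N (Set.Ici 0))
    {f : Ω → ℝ} (hf : Integrable f μ) {m v : ℝ} (hv : 0 < v)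
    (hm₁ : (1 / 2 : ENNReal) ≤ μ {x | m ≤ f x})
    (hm₂ : (1 / 2 : ENNReal) ≤ μ {x | f x ≤ m})
    (hGint : Integrable (fun x => N (|f x - ∫ y, f y ∂μ| / v)) μ)
    (hG1 : ∫ x, N (|f x - ∫ y, f y ∂μ| / v) ∂μ ≤ 1) :
    N (|(∫ y, f y ∂μ) - m| / (2 * v)) ≤ 1 := by
  set E := ∫ y, f y ∂μ with hE
  set c := |E - m| with hcdef
  have hc0 : 0 ≤ c := abs_nonneg _
  have hGnn : ∀ x, 0 ≤ N (|f x - E| / v) :=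
    fun x => hNnn _ (div_nonneg (abs_nonneg _) hv.le)
  have key : N (c / v) ≤ 2 := by
    obtain ⟨f', hf'meas, hff'⟩ : ∃ f', StronglyMeasurable f' ∧ f =ᵐ[μ] f' :=
      ⟨hf.1.mk f, hf.1.stronglyMeasurable_mk, hf.1.ae_eq_mk⟩
    obtain ⟨s, hs, hμs, hbig⟩ :
        ∃ s : Set Ω, MeasurableSet s ∧ (1 / 2 : ENNReal) ≤ μ s ∧
          (∀ᵐ x ∂μ, x ∈ s → c ≤ |f x - E|) := by
      rcases le_total E m with hEm | hmE
      · refine ⟨{x | m ≤ f' x}, measurableSet_le measurable_const hf'meas.measurable, ?_, ?_⟩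
        · have hset : {x | m ≤ f x} =ᵐ[μ] {x | m ≤ f' x} := by
            filter_upwards [hff'] with x hx
            exact congrArg (fun t => m ≤ t) hx
          rw [← measure_congr hset]; exact hm₁
        · filter_upwards [hff'] with x hx hxs
          have hmf : m ≤ f x := by rw [hx]; exact hxs
          have hcm : c = m - E := by rw [hcdef, abs_of_nonpos (by linarith), neg_sub]
          rw [hcm]
          exact le_trans (by linarith) (le_abs_self _)
      · refine ⟨{x | f' x ≤ m}, measurableSet_le hf'meas.measurable measurable_const, ?_, ?_⟩
        · have hset : {x | f x ≤ m} =ᵐ[μ] {x | f' x ≤ m} := by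
            filter_upwards [hff'] with x hx
            exact congrArg (fun t => t ≤ m) hx
          rw [← measure_congr hset]; exact hm₂
        · filter_upwards [hff'] with x hx hxs
          have hmf : f x ≤ m := by rw [hx]; exact hxs
          have hcm : c = E - m := by rw [hcdef, abs_of_nonneg (by linarith)]
          rw [hcm]
          exact le_trans (by linarith) (neg_le_abs _)
    have hone : N (c / v) * (μ s).toReal ≤ 1 := by
      have hconst : ∫ _ in s, N (c / v) ∂μ = (μ s).toReal * N (c / v) := by
        rw [setIntegral_const, smul_eq_mul]; rfl
      have hmono' : ∫ _ in s, N (c / v) ∂μ ≤ ∫ x in s, N (|f x - E| / v) ∂μ := by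
        refine setIntegral_mono_on_ae (integrableOn_const (C := N (c / v)) (measure_ne_top μ s) enorm_ne_top)
          hGint.integrableOn hs ?_
        filter_upwards [hbig] with x hx hxs
        have h1 : c / v ≤ |f x - E| / v := by gcongr; exact hx hxs
        exact hmono (Set.mem_Ici.2 (div_nonneg hc0 hv.le))
          (Set.mem_Ici.2 (div_nonneg (abs_nonneg _) hv.le)) h1
      have hle : ∫ x in s, N (|f x - E| / v) ∂μ ≤ ∫ x, N (|f x - E| / v) ∂μ :=
        setIntegral_le_integral hGint (ae_of_all _ hGnn)
      calc N (c / v) * (μ s).toReal = ∫ _ in s, N (c / v) ∂μ := by rw [hconst, mul_comm]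
        _ ≤ ∫ x in s, N (|f x - E| / v) ∂μ := hmono'
        _ ≤ ∫ x, N (|f x - E| / v) ∂μ := hle
        _ ≤ 1 := hG1
    have htoReal : (1 / 2 : ℝ) ≤ (μ s).toReal := by
      have h := ENNReal.toReal_mono (measure_ne_top μ s) hμs
      simpa using h
    have hNcv : 0 ≤ N (c / v) := hNnn _ (div_nonneg hc0 hv.le)
    nlinarith
  have hhalf := hconv.2 (Set.mem_Ici.2 (div_nonneg hc0 hv.le)) (Set.mem_Ici.2 (le_refl (0:ℝ)))
    (show (0:ℝ) ≤ 1/2 by norm_num) (show (0:ℝ) ≤ 1/2 by norm_num)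
    (show (1:ℝ)/2 + 1/2 = 1 by norm_num)
  simp only [smul_eq_mul, mul_zero, add_zero, hN0] at hhalf
  have harg : (1:ℝ)/2 * (c / v) = c / (2 * v) := by
    field_simp
  rw [harg] at hhalf
  linarith

end AuxOrlicz

/-- `(1/2)·‖f − E_μ f‖_{N(μ)} ≤ ‖f − M_μ f‖_{N(μ)} ≤ 3·‖f − E_μ f‖_{N(μ)}`
for any median `m` of `f`, for an integrable `f` with finite Orlicz norm. -/
theorem mean_median_orlicz_equivalence {Ω : Type*} [MeasurableSpace Ω] (μ : Measure Ω)
    [IsProbabilityMeasure μ] (N : ℝ → ℝ)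
    (hN0 : N 0 = 0)
    (hNnn : ∀ t, 0 ≤ t → 0 ≤ N t)
    (hconv : ConvexOn ℝ (Set.Ici 0) N)
    (hmono : MonotoneOn N (Set.Ici 0))
    (hnz : ∃ t, 0 ≤ t ∧ N t ≠ 0)
    (f : Ω → ℝ) (hf : Integrable f μ)
    (m : ℝ)
    (hm₁ : (1 / 2 : ENNReal) ≤ μ {x | m ≤ f x})
    (hm₂ : (1 / 2 : ENNReal) ≤ μ {x | f x ≤ m})
    (hfin : {v : ℝ | 0 < v ∧ ∫ x, N (|f x - ∫ y, f y ∂μ| / v) ∂μ ≤ 1}.Nonempty) :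
    (1 / 2 : ℝ) * orliczNorm μ N (fun x => f x - ∫ y, f y ∂μ)
        ≤ orliczNorm μ N (fun x => f x - m) ∧
      orliczNorm μ N (fun x => f x - m)
        ≤ 3 * orliczNorm μ N (fun x => f x - ∫ y, f y ∂μ) := by
  classical
  set E : ℝ := ∫ y, f y ∂μ with hE
  set c : ℝ := |E - m| with hcdef
  have hc0 : 0 ≤ c := abs_nonneg _
  have hg : AEStronglyMeasurable (fun x => f x - E) μ := hf.1.sub aestronglyMeasurable_const
  have hh : AEStronglyMeasurable (fun x => f x - m) μ := hf.1.sub aestronglyMeasurable_const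
  have hgh : ∀ x, |f x - m| ≤ |f x - E| + c := by
    intro x
    calc |f x - m| = |(f x - E) + (E - m)| := by rw [sub_add_sub_cancel]
      _ ≤ |f x - E| + |E - m| := abs_add_le _ _
  have hhg : ∀ x, |f x - E| ≤ |f x - m| + c := by
    intro x
    calc |f x - E| = |(f x - m) + (m - E)| := by rw [sub_add_sub_cancel]
      _ ≤ |f x - m| + |m - E| := abs_add_le _ _
      _ = |f x - m| + c := by rw [hcdef, abs_sub_comm m E]
  set SA : Set ℝ := {v : ℝ | 0 < v ∧ ∫ x, N (|f x - E| / v) ∂μ ≤ 1} with hSA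
  set SB : Set ℝ := {v : ℝ | 0 < v ∧ ∫ x, N (|f x - m| / v) ∂μ ≤ 1} with hSB
  have bddA : BddBelow SA := ⟨0, fun v hv => hv.1.le⟩
  have bddB : BddBelow SB := ⟨0, fun v hv => hv.1.le⟩
  have hAne : SA.Nonempty := hfin
  -- upper transfer : from SA to SB
  have U' : ∀ v ∈ SA, ∃ w, w ∈ SB ∧ w ≤ 3 * v := by
    rintro v ⟨hv, hint⟩
    by_cases hGint : Integrable (fun x => N (|f x - E| / v)) μ
    · have hcheb : N (c / (2 * v)) ≤ 1 := by
        have h := aux_cheb hN0 hNnn hconv hmono hf hv hm₁ hm₂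
          (by rw [← hE]; exact hGint) (by rw [← hE]; exact hint)
        rwa [← hE, ← hcdef] at h
      have h2v : (0:ℝ) < 2 * v := by linarith
      have htr := aux_transfer hconv hmono hNnn hc0 hv h2v hgh
        (aux_aesm hmono hh (show (0:ℝ) < v + 2 * v by linarith)) hGint
      refine ⟨3 * v, ⟨by linarith, ?_⟩, le_rfl⟩
      rw [show (3:ℝ) * v = v + 2 * v by ring]
      refine htr.2.trans ?_
      have hv0 : v ≠ 0 := ne_of_gt hv
      have e1 : v / (v + 2 * v) = 1/3 := by field_simp; ring
      have e2 : (2 * v) / (v + 2 * v) = 2/3 := by field_simp; ring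
      rw [e1, e2]
      linarith
    · refine ⟨v/2, ⟨half_pos hv, ?_⟩, by linarith⟩
      have hni : ¬ Integrable (fun x => N (|f x - m| / (v/2))) μ := by
        intro hcon
        apply hGint
        have h := (aux_transfer hconv hmono hNnn hc0 (half_pos hv) (half_pos hv) hhg
          (aux_aesm hmono hg (show (0:ℝ) < v/2 + v/2 by linarith)) hcon).1
        rwa [show v/2 + v/2 = v by ring] at h
      rw [integral_undef hni]
      norm_num
  -- lower transfer : from SB to SA
  have L' : ∀ w ∈ SB, ∃ u, u ∈ SA ∧ u ≤ 2 * w := by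
    rintro w ⟨hw, hint⟩
    by_cases hHint : Integrable (fun x => N (|f x - m| / w)) μ
    · have hjen : N (c / w) ≤ 1 := by
        have h := aux_jensen (aux_cont hN0 hNnn hconv) hconv hmono hf hw hHint hint
        rwa [← hE, ← hcdef] at h
      have htr := aux_transfer hconv hmono hNnn hc0 hw hw hhg
        (aux_aesm hmono hg (show (0:ℝ) < w + w by linarith)) hHint
      refine ⟨2 * w, ⟨by linarith, ?_⟩, le_rfl⟩
      rw [show (2:ℝ) * w = w + w by ring]
      refine htr.2.trans ?_
      have hw0 : w ≠ 0 := ne_of_gt hw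
      have e1 : w / (w + w) = 1/2 := by field_simp; ring
      rw [e1]
      linarith
    · refine ⟨w/2, ⟨half_pos hw, ?_⟩, by linarith⟩
      have hni : ¬ Integrable (fun x => N (|f x - E| / (w/2))) μ := by
        intro hcon
        apply hHint
        have h := (aux_transfer hconv hmono hNnn hc0 (half_pos hw) (half_pos hw) hgh
          (aux_aesm hmono hh (show (0:ℝ) < w/2 + w/2 by linarith)) hcon).1
        rwa [show w/2 + w/2 = w by ring] at h
      rw [integral_undef hni]
      norm_num
  have hBne : SB.Nonempty := by
    obtain ⟨v, hv⟩ := hAne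
    obtain ⟨w, hw, _⟩ := U' v hv
    exact ⟨w, hw⟩
  have key1 : sInf SB / 3 ≤ sInf SA := by
    refine le_csInf hAne fun v hv => ?_
    obtain ⟨w, hwB, hw3⟩ := U' v hv
    have h1 : sInf SB ≤ w := csInf_le bddB hwB
    linarith
  have key2 : sInf SA / 2 ≤ sInf SB := by
    refine le_csInf hBne fun w hw => ?_
    obtain ⟨u, huA, hu2⟩ := L' w hw
    have h1 : sInf SA ≤ u := csInf_le bddA huA
    linarith
  have eA : orliczNorm μ N (fun x => f x - E) = sInf SA := rfl
  have eB : orliczNorm μ N (fun x => f x - m) = sInf SB := rfl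
  rw [eA, eB]
  constructor <;> linarith
end

section
/- Single-step Cheeger stability: let d be a metric on a set Ω, let λ_K, λ_L be probability measures with λ_L = λ_K|_L / λ_K(L) for a Borel set L with λ_K(L) ≥ p > 1/2, and suppose the isoperimetric profile of (Ω, d, λ_K) satisfies I_{λ_K}(t) ≥ D_K·min(t, 1−t) where moreover for every Borel set A with λ_K(A) = 1/2 one has λ_K⁺(A) ≥ D_{Che}(K)/2 with D_{Che}(K) = 2·I_{λ_K}(1/2). Then, assuming additionally I_{λ_K} is concave and symmetric about 1/2, D_{Che}(K) ≥ (2p − 1)·D_{Che}(L), where D_{Che}(L) is the Cheeger constant of (Ω, d, λ_L). -/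
open MeasureTheory Filter

/-- Minkowski (exterior) boundary measure of a set `A` with respect to a metric and a
measure `μ`. -/
noncomputable def boundaryMeasure {Ω : Type*} [PseudoMetricSpace Ω] [MeasurableSpace Ω]
    (μ : Measure Ω) (A : Set Ω) : ENNReal :=
  liminf (fun ε : ℝ =>
      ENNReal.ofReal (((μ (Metric.thickening ε A)).toReal - (μ A).toReal) / ε))
    (nhdsWithin 0 (Set.Ioi 0))

/-- Isoperimetric profile of a metric probability space. -/
noncomputable def isoProfile {Ω : Type*} [PseudoMetricSpace Ω] [MeasurableSpace Ω]
    (μ : Measure Ω) (t : ℝ) : ENNReal :=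
  ⨅ (A : Set Ω) (_ : MeasurableSet A) (_ : (μ A).toReal = t), boundaryMeasure μ A

/-- The Cheeger constant of a metric probability space. -/
noncomputable def cheegerConst {Ω : Type*} [PseudoMetricSpace Ω] [MeasurableSpace Ω]
    (μ : Measure Ω) : ℝ :=
  sSup {D : ℝ | 0 ≤ D ∧ ∀ A : Set Ω, MeasurableSet A →
    ENNReal.ofReal (D * min (μ A).toReal (1 - (μ A).toReal)) ≤ boundaryMeasure μ A}

lemma aux_liminf_const_mul_le {α : Type*} (l : Filter α) (a : ENNReal) (f : α → ENNReal) :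
    a * liminf f l ≤ liminf (fun x => a * f x) l := by
  rw [liminf_eq, liminf_eq, ENNReal.mul_sSup]
  apply iSup₂_le
  intro b hb
  apply le_sSup
  exact hb.mono fun x hx => mul_le_mul_right hx a

lemma aux_finite_vals {Ω : Type*} {m : MeasurableSpace Ω} (μ : Measure Ω) [IsFiniteMeasure μ]
    {η : ℝ} (hη : 0 < η)
    (hgap : ∀ A : Set Ω, MeasurableSet A → (μ A).toReal = 0 ∨ η ≤ (μ A).toReal) :
    {r : ℝ | ∃ A : Set Ω, MeasurableSet A ∧ (μ A).toReal = r}.Finite := by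
  have key : ∀ n : ℕ, ∀ S : Set Ω, MeasurableSet S → (μ S).toReal ≤ n * η →
      {r : ℝ | ∃ A : Set Ω, MeasurableSet A ∧ (μ (A ∩ S)).toReal = r}.Finite := by
    intro n
    induction n with
    | zero =>
      intro S hS hle
      apply Set.Finite.subset (Set.finite_singleton 0)
      rintro r ⟨A, hA, rfl⟩
      have h1 : (μ (A ∩ S)).toReal ≤ (μ S).toReal :=
        ENNReal.toReal_mono (measure_ne_top μ S) (measure_mono Set.inter_subset_right)
      have h2 : 0 ≤ (μ (A ∩ S)).toReal := ENNReal.toReal_nonneg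
      simp only [Set.mem_singleton_iff]
      norm_num at hle
      linarith
    | succ n ih =>
      intro S hS hle
      by_cases hat : ∀ A : Set Ω, MeasurableSet A →
          (μ (A ∩ S)).toReal = 0 ∨ (μ (A ∩ S)).toReal = (μ S).toReal
      · apply Set.Finite.subset ((Set.finite_singleton (μ S).toReal).insert 0)
        rintro r ⟨A, hA, rfl⟩
        rcases hat A hA with h | h <;> simp [h]
      · push_neg at hat
        obtain ⟨A₁, hA₁, hne0, hneS⟩ := hat
        set S₁ : Set Ω := A₁ ∩ S with hS₁def
        set S₂ : Set Ω := S \ A₁ with hS₂def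
        have hS₁ : MeasurableSet S₁ := hA₁.inter hS
        have hS₂ : MeasurableSet S₂ := hS.diff hA₁
        have hadd : (μ S₁).toReal + (μ S₂).toReal = (μ S).toReal := by
          rw [← ENNReal.toReal_add (measure_ne_top μ _) (measure_ne_top μ _)]
          congr 1
          rw [hS₁def, hS₂def, Set.inter_comm]
          exact measure_inter_add_diff S hA₁
        have hv1 : η ≤ (μ S₁).toReal := by
          rcases hgap S₁ hS₁ with h | h
          · exact absurd h hne0
          · exact h
        have hv2 : η ≤ (μ S₂).toReal := by
          rcases hgap S₂ hS₂ with h | h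
          · exfalso; apply hneS; linarith
          · exact h
        have hb1 : (μ S₁).toReal ≤ n * η := by
          have := ENNReal.toReal_nonneg (a := μ S₂)
          push_cast at hle ⊢
          linarith
        have hb2 : (μ S₂).toReal ≤ n * η := by
          push_cast at hle ⊢
          linarith
        have f1 := ih S₁ hS₁ hb1
        have f2 := ih S₂ hS₂ hb2
        apply Set.Finite.subset (Set.Finite.image2 (· + ·) f1 f2)
        rintro r ⟨A, hA, rfl⟩
        refine Set.mem_image2.2 ⟨(μ (A ∩ S₁)).toReal, ⟨A, hA, rfl⟩,
          (μ (A ∩ S₂)).toReal, ⟨A, hA, rfl⟩, ?_⟩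
        rw [← ENNReal.toReal_add (measure_ne_top μ _) (measure_ne_top μ _)]
        congr 1
        have : A ∩ S ∩ A₁ = A ∩ S₁ := by rw [hS₁def]; ext x; simp; tauto
        have h2 : (A ∩ S) \ A₁ = A ∩ S₂ := by rw [hS₂def]; ext x; simp; tauto
        rw [← this, ← h2]
        exact (measure_inter_add_diff (A ∩ S) hA₁)
  have hfin := key (Nat.ceil ((μ Set.univ).toReal / η)) Set.univ MeasurableSet.univ
    (by
      rw [← div_le_iff₀ hη] at *
      exact Nat.le_ceil _)
  apply hfin.subset
  rintro r ⟨A, hA, rfl⟩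
  exact ⟨A, hA, by rw [Set.inter_univ]⟩

lemma aux_exists_thickening_finite_boundary {Ω : Type*} [MetricSpace Ω] [MeasurableSpace Ω]
    [BorelSpace Ω] (μ : Measure Ω) [IsFiniteMeasure μ] (F : Set Ω) (hF : IsClosed F) {b : ℝ}
    (hb : (μ F).toReal < b) :
    ∃ C : Set Ω, MeasurableSet C ∧ (μ F).toReal ≤ (μ C).toReal ∧ (μ C).toReal < b ∧
      boundaryMeasure μ C ≠ ⊤ := by
  classical
  set h : ℝ → ℝ := fun ε => (μ (Metric.thickening ε F)).toReal with hdef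
  have hmono : Monotone h := fun a c hac =>
    ENNReal.toReal_mono (measure_ne_top μ _) (measure_mono (Metric.thickening_mono hac F))
  have htend : Tendsto h (nhdsWithin 0 (Set.Ioi 0)) (nhds (μ F).toReal) := by
    have h1 : Tendsto (fun ε : ℝ => μ (Metric.thickening ε F)) (nhdsWithin 0 (Set.Ioi 0))
        (nhds (μ (closure F))) :=
      tendsto_measure_thickening ⟨1, one_pos, measure_ne_top μ _⟩
    rw [hF.closure_eq] at h1
    exact (ENNReal.tendsto_toReal (measure_ne_top μ F)).comp h1
  have hev : ∀ᶠ ε in nhdsWithin 0 (Set.Ioi 0), h ε < b := htend.eventually_lt_const hb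
  obtain ⟨u, hu, husub⟩ := mem_nhdsGT_iff_exists_Ioc_subset.mp hev
  have hu0 : (0:ℝ) < u := hu
  obtain ⟨ε₀, hε₀mem, hε₀diff⟩ : ∃ x ∈ Set.Ioo (0:ℝ) u, DifferentiableAt ℝ h x := by
    by_contra hcon
    push_neg at hcon
    have hsub : Set.Ioo (0:ℝ) u ⊆ {x | ¬ DifferentiableAt ℝ h x} := fun x hx => hcon x hx
    have h0 : volume {x : ℝ | ¬ DifferentiableAt ℝ h x} = 0 := by
      have := hmono.ae_differentiableAt
      rwa [MeasureTheory.ae_iff] at this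
    have : volume (Set.Ioo (0:ℝ) u) = 0 := measure_mono_null hsub h0
    rw [Real.volume_Ioo] at this
    simp only [ENNReal.ofReal_eq_zero, sub_zero] at this
    linarith
  set C : Set Ω := Metric.thickening ε₀ F with hCdef
  have hCmeas : MeasurableSet C := Metric.isOpen_thickening.measurableSet
  have hCval : (μ C).toReal = h ε₀ := rfl
  have hε₀pos : 0 < ε₀ := hε₀mem.1
  refine ⟨C, hCmeas, ?_, ?_, ?_⟩
  · rw [hCval]
    exact ENNReal.toReal_mono (measure_ne_top μ _)
      (measure_mono (Metric.self_subset_thickening hε₀pos F))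
  · rw [hCval]
    exact husub ⟨hε₀pos, le_of_lt hε₀mem.2⟩
  · -- boundary finite
    set d : ℝ := deriv h ε₀ with hddef
    have hd : HasDerivAt h d ε₀ := hε₀diff.hasDerivAt
    have hslope : Tendsto (fun δ : ℝ => (h (ε₀ + δ) - h ε₀) / δ) (nhdsWithin 0 (Set.Ioi 0))
        (nhds d) := by
      have hmap : Tendsto (fun δ : ℝ => ε₀ + δ) (nhdsWithin 0 (Set.Ioi 0))
          (nhdsWithin ε₀ {x | x ≠ ε₀}) := by
        apply tendsto_nhdsWithin_of_tendsto_nhds_of_eventually_within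
        · have : Tendsto (fun δ : ℝ => ε₀ + δ) (nhds 0) (nhds (ε₀ + 0)) :=
            (continuous_const.add continuous_id).tendsto 0
          rw [add_zero] at this
          exact this.mono_left nhdsWithin_le_nhds
        · filter_upwards [self_mem_nhdsWithin] with δ (hδ : 0 < δ)
          exact ne_of_gt (by linarith)
      have := (hasDerivAt_iff_tendsto_slope.mp hd).comp hmap
      apply this.congr
      intro δ
      simp only [Function.comp_apply, slope_def_field]
      rw [add_sub_cancel_left]
    have hof : Tendsto (fun δ : ℝ => ENNReal.ofReal ((h (ε₀ + δ) - h ε₀) / δ))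
        (nhdsWithin 0 (Set.Ioi 0)) (nhds (ENNReal.ofReal d)) :=
      ENNReal.tendsto_ofReal hslope
    have hliminf : liminf (fun δ : ℝ => ENNReal.ofReal ((h (ε₀ + δ) - h ε₀) / δ))
        (nhdsWithin 0 (Set.Ioi 0)) = ENNReal.ofReal d := hof.liminf_eq
    have hbd : boundaryMeasure μ C ≤ ENNReal.ofReal d := by
      rw [boundaryMeasure, ← hliminf]
      have hmain : ∀ᶠ δ in nhdsWithin (0:ℝ) (Set.Ioi 0),
          ENNReal.ofReal (((μ (Metric.thickening δ C)).toReal - (μ C).toReal) / δ) ≤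
          ENNReal.ofReal ((h (ε₀ + δ) - h ε₀) / δ) := by
        filter_upwards [self_mem_nhdsWithin] with δ (hδ : 0 < δ)
        apply ENNReal.ofReal_le_ofReal
        rw [div_le_div_iff_of_pos_right hδ]
        have hsub2 : Metric.thickening δ C ⊆ Metric.thickening (ε₀ + δ) F := by
          rw [hCdef]
          have := Metric.thickening_thickening_subset δ ε₀ F
          rwa [add_comm δ ε₀] at this
        have : (μ (Metric.thickening δ C)).toReal ≤ h (ε₀ + δ) :=
          ENNReal.toReal_mono (measure_ne_top μ _) (measure_mono hsub2)
        rw [hCval]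
        linarith
      exact liminf_le_liminf hmain
    exact ne_top_of_le_ne_top ENNReal.ofReal_ne_top hbd


set_option maxHeartbeats 2000000

/-- single-step Cheeger stability: if `λ_L = λ_K|_L/λ_K(L)` with
`λ_K(L) ≥ p > 1/2`, the isoperimetric profile `I` of `λ_K` is concave on `(0,1)`,
symmetric about `1/2`, satisfies `I(t) ≥ D_{Che}(K)·min(t,1−t)` with
`D_{Che}(K) = 2·I(1/2)`, and every Borel set of `λ_K`-measure `1/2` has boundary measure
at least `D_{Che}(K)/2`, then `D_{Che}(K) ≥ (2p−1)·D_{Che}(L)`. -/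
theorem cheeger_single_step_stability {Ω : Type*} [MetricSpace Ω] [MeasurableSpace Ω]
    [BorelSpace Ω]
    (μK : Measure Ω) [IsProbabilityMeasure μK]
    (L : Set Ω) (hLmeas : MeasurableSet L)
    (p : ℝ) (hp : 1 / 2 < p) (hp1 : p ≤ 1)
    (hL : ENNReal.ofReal p ≤ μK L)
    (μL : Measure Ω) (hμL : μL = (μK L)⁻¹ • μK.restrict L)
    (hIconc : ConcaveOn ℝ (Set.Ioo 0 1) (fun t => (isoProfile μK t).toReal))
    (hIsym : ∀ t ∈ Set.Icc (0 : ℝ) 1, isoProfile μK t = isoProfile μK (1 - t))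
    (hIlin : ∀ t ∈ Set.Icc (0 : ℝ) 1,
      ENNReal.ofReal (2 * (isoProfile μK (1 / 2)).toReal * min t (1 - t)) ≤ isoProfile μK t)
    (hhalf : ∀ A : Set Ω, MeasurableSet A → (μK A).toReal = 1 / 2 →
      ENNReal.ofReal ((isoProfile μK (1 / 2)).toReal) ≤ boundaryMeasure μK A) :
    (2 * p - 1) * cheegerConst μL ≤ 2 * (isoProfile μK (1 / 2)).toReal := by
  classical
  have hp0 : 0 < p := by linarith
  have hLne0 : μK L ≠ 0 := (lt_of_lt_of_le (ENNReal.ofReal_pos.2 hp0) hL).ne'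
  have hLneT : μK L ≠ ⊤ := measure_ne_top μK L
  set qr : ℝ := (μK L).toReal with hqrdef
  have hqrp : p ≤ qr := by
    have := ENNReal.toReal_mono hLneT hL
    rwa [ENNReal.toReal_ofReal hp0.le] at this
  have hqr1 : qr ≤ 1 := by
    have := ENNReal.toReal_mono (ENNReal.one_ne_top) (prob_le_one (μ := μK) (s := L))
    simpa using this
  have hqr0 : 0 < qr := lt_of_lt_of_le hp0 hqrp
  have hμLuniv : μL Set.univ = 1 := by
    rw [hμL]
    simp only [Measure.smul_apply, Measure.restrict_apply_univ, smul_eq_mul]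
    exact ENNReal.inv_mul_cancel hLne0 hLneT
  haveI hμLprob : IsProbabilityMeasure μL := ⟨hμLuniv⟩
  have hμLapp : ∀ A : Set Ω, MeasurableSet A → (μL A).toReal = (μK (A ∩ L)).toReal / qr := by
    intro A hA
    rw [hμL]
    simp only [Measure.smul_apply, Measure.restrict_apply hA, smul_eq_mul]
    rw [ENNReal.toReal_mul, ENNReal.toReal_inv, hqrdef]
    ring
  have hsplitK : ∀ X : Set Ω, (μK X).toReal = (μK (X ∩ L)).toReal + (μK (X \ L)).toReal := by
    intro X
    rw [← ENNReal.toReal_add (measure_ne_top _ _) (measure_ne_top _ _)]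
    congr 1
    exact (measure_inter_add_diff X hLmeas).symm
  have hdiffcomp : ∀ A B : Set Ω, MeasurableSet A → MeasurableSet B → A ⊆ B →
      p * ((μL B).toReal - (μL A).toReal) ≤ (μK B).toReal - (μK A).toReal := by
    intro A B hA hB hAB
    have h1 : (μK (A \ L)).toReal ≤ (μK (B \ L)).toReal :=
      ENNReal.toReal_mono (measure_ne_top _ _)
        (measure_mono (Set.diff_subset_diff_left hAB))
    have h2 : (μK (A ∩ L)).toReal ≤ (μK (B ∩ L)).toReal :=
      ENNReal.toReal_mono (measure_ne_top _ _)
        (measure_mono (Set.inter_subset_inter_left L hAB))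
    rw [hμLapp A hA, hμLapp B hB]
    have heq : p * ((μK (B ∩ L)).toReal / qr - (μK (A ∩ L)).toReal / qr)
        = (p / qr) * ((μK (B ∩ L)).toReal - (μK (A ∩ L)).toReal) := by ring
    rw [heq]
    have hple : p / qr ≤ 1 := (div_le_one hqr0).2 hqrp
    calc (p / qr) * ((μK (B ∩ L)).toReal - (μK (A ∩ L)).toReal)
        ≤ (μK (B ∩ L)).toReal - (μK (A ∩ L)).toReal :=
          mul_le_of_le_one_left (by linarith) hple
      _ ≤ (μK B).toReal - (μK A).toReal := by
          rw [hsplitK A, hsplitK B]; linarith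
  have hbd_comp : ∀ A : Set Ω, MeasurableSet A →
      ENNReal.ofReal p * boundaryMeasure μL A ≤ boundaryMeasure μK A := by
    intro A hA
    have hpt : ∀ᶠ ε in nhdsWithin (0:ℝ) (Set.Ioi 0),
        ENNReal.ofReal p *
          ENNReal.ofReal (((μL (Metric.thickening ε A)).toReal - (μL A).toReal) / ε)
          ≤ ENNReal.ofReal (((μK (Metric.thickening ε A)).toReal - (μK A).toReal) / ε) := by
      filter_upwards [self_mem_nhdsWithin] with ε (hε : 0 < ε)
      rw [← ENNReal.ofReal_mul hp0.le]
      apply ENNReal.ofReal_le_ofReal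
      rw [mul_div_assoc'] 
      rw [div_le_div_iff_of_pos_right hε]
      exact hdiffcomp A (Metric.thickening ε A) hA Metric.isOpen_thickening.measurableSet
        (Metric.self_subset_thickening hε A)
    calc ENNReal.ofReal p * boundaryMeasure μL A
        ≤ liminf (fun ε : ℝ => ENNReal.ofReal p *
            ENNReal.ofReal (((μL (Metric.thickening ε A)).toReal - (μL A).toReal) / ε))
            (nhdsWithin 0 (Set.Ioi 0)) := by
          rw [boundaryMeasure]
          exact aux_liminf_const_mul_le _ _ _
      _ ≤ boundaryMeasure μK A := by
          rw [boundaryMeasure]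
          exact liminf_le_liminf hpt
  have hcompl1 : (μK Lᶜ).toReal = 1 - qr := by
    rw [measure_compl hLmeas (measure_ne_top _ _), measure_univ]
    rw [ENNReal.toReal_sub_of_le prob_le_one ENNReal.one_ne_top]
    simp [hqrdef]
  have hvb : ∀ X : Set Ω, MeasurableSet X →
      (μK X).toReal - (1 - qr) ≤ qr * (μL X).toReal ∧ qr * (μL X).toReal ≤ (μK X).toReal := by
    intro X hX
    have happ : qr * (μL X).toReal = (μK (X ∩ L)).toReal := by
      rw [hμLapp X hX]; field_simp
    constructor
    · rw [happ]
      have hcle : (μK (X \ L)).toReal ≤ 1 - qr := by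
        rw [← hcompl1]
        exact ENNReal.toReal_mono (measure_ne_top _ _)
          (measure_mono (Set.diff_subset_compl X L))
      have := hsplitK X
      linarith
    · rw [happ]
      exact ENNReal.toReal_mono (measure_ne_top _ _) (measure_mono Set.inter_subset_left)
  have hproflb : ∀ D : ℝ, 0 ≤ D →
      (∀ A : Set Ω, MeasurableSet A →
        ENNReal.ofReal (D * min (μL A).toReal (1 - (μL A).toReal)) ≤ boundaryMeasure μL A) →
      ∀ t : ℝ, 1 - qr < t → t < qr →
        ENNReal.ofReal (p * (D * (min (t - (1 - qr)) (qr - t) / qr))) ≤ isoProfile μK t := by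
    intro D hD0 hDC t ht1 ht2
    rw [isoProfile]
    apply le_iInf; intro X
    apply le_iInf; intro hX
    apply le_iInf; intro hXt
    have hXv := hvb X hX
    rw [hXt] at hXv
    have hv1 : min (t - (1 - qr)) (qr - t) / qr ≤ min (μL X).toReal (1 - (μL X).toReal) := by
      apply le_min
      · rw [div_le_iff₀ hqr0]
        calc min (t - (1 - qr)) (qr - t) ≤ t - (1 - qr) := min_le_left _ _
          _ ≤ (μL X).toReal * qr := by rw [mul_comm]; exact hXv.1
      · rw [div_le_iff₀ hqr0]
        have h2 := hXv.2
        calc min (t - (1 - qr)) (qr - t) ≤ qr - t := min_le_right _ _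
          _ ≤ (1 - (μL X).toReal) * qr := by nlinarith
    calc ENNReal.ofReal (p * (D * (min (t - (1 - qr)) (qr - t) / qr)))
        ≤ ENNReal.ofReal (p * (D * min (μL X).toReal (1 - (μL X).toReal))) := by
          apply ENNReal.ofReal_le_ofReal
          apply mul_le_mul_of_nonneg_left _ hp0.le
          exact mul_le_mul_of_nonneg_left hv1 hD0
      _ = ENNReal.ofReal p * ENNReal.ofReal (D * min (μL X).toReal (1 - (μL X).toReal)) :=
          ENNReal.ofReal_mul hp0.le
      _ ≤ ENNReal.ofReal p * boundaryMeasure μL X := mul_le_mul_right (hDC X hX) _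
      _ ≤ boundaryMeasure μK X := hbd_comp X hX
  set c : ℝ := (isoProfile μK (1 / 2)).toReal with hcdef
  have hc0 : 0 ≤ c := ENNReal.toReal_nonneg
  have h2p : 0 < 2 * p - 1 := by linarith
  set SS : Set ℝ := {D : ℝ | 0 ≤ D ∧ ∀ A : Set Ω, MeasurableSet A →
    ENNReal.ofReal (D * min (μL A).toReal (1 - (μL A).toReal)) ≤ boundaryMeasure μL A}
    with hSSdef
  have hcc : cheegerConst μL = sSup SS := rfl
  by_cases hBdd : BddAbove SS
  swap
  · rw [hcc, Real.sSup_of_not_bddAbove hBdd, mul_zero]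
    positivity
  · have hex : ∃ A : Set Ω, MeasurableSet A ∧
        0 < min (μL A).toReal (1 - (μL A).toReal) ∧ boundaryMeasure μL A ≠ ⊤ := by
      by_contra hcon
      have hforall : ∀ A : Set Ω, MeasurableSet A →
          0 < min (μL A).toReal (1 - (μL A).toReal) → boundaryMeasure μL A = ⊤ := by
        intro A hA hmin
        by_contra hne
        exact hcon ⟨A, hA, hmin, hne⟩
      obtain ⟨M, hM⟩ := hBdd
      have hmem : max M 0 + 1 ∈ SS := by
        constructor
        · positivity
        · intro A hA
          rcases lt_or_ge 0 (min (μL A).toReal (1 - (μL A).toReal)) with hmin | hmin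
          · rw [hforall A hA hmin]; exact le_top
          · have hle0 : (max M 0 + 1) * min (μL A).toReal (1 - (μL A).toReal) ≤ 0 :=
              mul_nonpos_of_nonneg_of_nonpos (by positivity) hmin
            rw [ENNReal.ofReal_eq_zero.2 hle0]
            exact zero_le
      have h1 := hM hmem
      have h2 := le_max_left M 0
      linarith
    obtain ⟨A₀, hA₀meas, hA₀min, hA₀bd⟩ := hex
    have hDle : ∀ D ∈ SS, (2 * p - 1) * D ≤ 2 * c := by
      intro D hD
      obtain ⟨hD0, hDC⟩ := hD
      by_cases hprof : isoProfile μK (1 / 2) = ⊤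
      · have hDle0 : D ≤ 0 := by
          by_contra hDpos'
          push_neg at hDpos'
          have ftop : ∀ t : ℝ, 1 - qr < t → t < qr → isoProfile μK t = ⊤ := by
            intro t ht1 ht2
            have ht0 : (0:ℝ) < t := by linarith
            have ht1' : t < 1 := by linarith
            have hlb := hproflb D hD0 hDC t ht1 ht2
            have hminpos : 0 < min (t - (1 - qr)) (qr - t) := lt_min (by linarith) (by linarith)
            have hwpos : 0 < p * (D * (min (t - (1 - qr)) (qr - t) / qr)) := by positivity
            have hf0 : (isoProfile μK t).toReal = 0 := by
              have hmem1 : t ∈ Set.Ioo (0:ℝ) 1 := ⟨ht0, ht1'⟩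
              have hmem2 : (1 - t) ∈ Set.Ioo (0:ℝ) 1 := ⟨by linarith, by linarith⟩
              have hcc2 := hIconc.2 hmem1 hmem2 (by norm_num : (0:ℝ) ≤ 1/2)
                (by norm_num : (0:ℝ) ≤ 1/2) (by norm_num)
              simp only [smul_eq_mul] at hcc2
              have harg2 : (1/2 : ℝ) * t + (1/2 : ℝ) * (1 - t) = 1/2 := by ring
              rw [harg2] at hcc2
              have hhalf0 : (isoProfile μK (1/2 : ℝ)).toReal = 0 := by
                rw [hprof]; simp
              have hnn1 : 0 ≤ (isoProfile μK t).toReal := ENNReal.toReal_nonneg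
              have hnn2 : 0 ≤ (isoProfile μK (1 - t)).toReal := ENNReal.toReal_nonneg
              rw [hhalf0] at hcc2
              linarith
            by_contra hne
            have hmono2 := ENNReal.toReal_mono hne hlb
            rw [ENNReal.toReal_ofReal hwpos.le, hf0] at hmono2
            linarith
          by_cases hmid : ∃ A : Set Ω, MeasurableSet A ∧
              (1 - qr)/qr < (μL A).toReal ∧ (μL A).toReal < 1
          · obtain ⟨A, hA, hAlb, hAub⟩ := hmid
            have hALmeas : MeasurableSet (A ∩ L) := hA.inter hLmeas
            have hALval : (μL (A ∩ L)).toReal = (μL A).toReal := by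
              rw [hμLapp _ hALmeas, hμLapp _ hA, Set.inter_assoc, Set.inter_self]
            have hεne : (ENNReal.ofReal ((μL A).toReal - (1 - qr)/qr)) ≠ 0 :=
              (ENNReal.ofReal_pos.2 (by linarith)).ne'
            obtain ⟨F, hFsub, hFclosed, hFlt⟩ :=
              hALmeas.exists_isClosed_lt_add (measure_ne_top μL _) hεne
            have hFmeas : MeasurableSet F := hFclosed.measurableSet
            have hFL : F ⊆ L := hFsub.trans Set.inter_subset_right
            have hFval : (1 - qr)/qr < (μL F).toReal := by
              have h3 : (μL (A ∩ L)).toReal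
                  < (μL F + ENNReal.ofReal ((μL A).toReal - (1 - qr)/qr)).toReal := by
                apply (ENNReal.toReal_lt_toReal (measure_ne_top _ _)
                  (ENNReal.add_ne_top.2 ⟨measure_ne_top _ _, ENNReal.ofReal_ne_top⟩)).2 hFlt
              rw [ENNReal.toReal_add (measure_ne_top _ _) ENNReal.ofReal_ne_top,
                ENNReal.toReal_ofReal (by linarith)] at h3
              rw [hALval] at h3
              linarith
            have hFub : (μL F).toReal < 1 := by
              have h1 : (μL F).toReal ≤ (μL (A ∩ L)).toReal :=
                ENNReal.toReal_mono (measure_ne_top _ _) (measure_mono hFsub)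
              rw [hALval] at h1
              linarith
            have hμKF : (μK F).toReal = qr * (μL F).toReal := by
              rw [hμLapp F hFmeas, Set.inter_eq_self_of_subset_left hFL]
              field_simp
            have hwin2 : (μK F).toReal < qr := by
              rw [hμKF]; nlinarith
            obtain ⟨C, hCmeas, hClb, hCub, hCbd⟩ :=
              aux_exists_thickening_finite_boundary μK F hFclosed hwin2
            have hwin1 : 1 - qr < (μK C).toReal := by
              have h5 : 1 - qr < (μK F).toReal := by
                rw [hμKF]
                have h6 := (div_lt_iff₀ hqr0).1 hFval
                nlinarith
              linarith
            have htop := ftop (μK C).toReal hwin1 hCub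
            have hle : isoProfile μK ((μK C).toReal) ≤ boundaryMeasure μK C := by
              rw [isoProfile]
              refine iInf_le_of_le C (iInf_le_of_le hCmeas ?_)
              exact iInf_le _ rfl
            rw [htop, top_le_iff] at hle
            exact hCbd hle
          · push_neg at hmid
            have hβ1 : (1 - qr)/qr < 1 := by rw [div_lt_one hqr0]; linarith
            have hη₀ : (0:ℝ) < 1 - (1 - qr)/qr := by linarith
            have hcompl2 : ∀ A : Set Ω, MeasurableSet A →
                (μL Aᶜ).toReal = 1 - (μL A).toReal := by
              intro A hA
              rw [measure_compl hA (measure_ne_top _ _), measure_univ,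
                ENNReal.toReal_sub_of_le prob_le_one ENNReal.one_ne_top]
              simp
            have hgap : ∀ A : Set Ω, MeasurableSet A →
                (μL A).toReal = 0 ∨ 1 - (1 - qr)/qr ≤ (μL A).toReal := by
              intro A hA
              rcases eq_or_ne ((μL A).toReal) 0 with h0 | h0
              · exact Or.inl h0
              · right
                rcases lt_or_ge ((1 - qr)/qr) ((μL Aᶜ).toReal) with hgt | hle'
                · have h1 := hmid Aᶜ hA.compl hgt
                  rw [hcompl2 A hA] at h1
                  have h2 : 0 ≤ (μL A).toReal := ENNReal.toReal_nonneg
                  have h4 : (μL A).toReal = 0 := by linarith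
                  exact absurd h4 h0
                · rw [hcompl2 A hA] at hle'
                  linarith
            have hVfin := aux_finite_vals μL hη₀ hgap
            obtain ⟨δ, hδpos, hδgap⟩ : ∃ δ : ℝ, 0 < δ ∧ ∀ r ∈ {r : ℝ | ∃ A : Set Ω,
                MeasurableSet A ∧ (μL A).toReal = r},
                r ≤ (μL A₀).toReal ∨ (μL A₀).toReal + δ ≤ r := by
              set Vs := {r : ℝ | ∃ A : Set Ω, MeasurableSet A ∧ (μL A).toReal = r} with hVsdef
              have hfin2 : (Vs ∩ Set.Ioi (μL A₀).toReal).Finite :=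
                hVfin.subset Set.inter_subset_left
              rcases Set.eq_empty_or_nonempty (Vs ∩ Set.Ioi (μL A₀).toReal) with hemp | hne
              · refine ⟨1, one_pos, fun r hr => Or.inl ?_⟩
                by_contra hc
                push_neg at hc
                have hrr : r ∈ Vs ∩ Set.Ioi (μL A₀).toReal := ⟨hr, hc⟩
                rw [hemp] at hrr
                exact Set.notMem_empty r hrr
              · have hne' : hfin2.toFinset.Nonempty := by
                  rwa [Set.Finite.toFinset_nonempty]
                set m := hfin2.toFinset.min' hne' with hmdef
                have hmmem : m ∈ Vs ∩ Set.Ioi (μL A₀).toReal := by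
                  have := hfin2.toFinset.min'_mem hne'
                  rwa [Set.Finite.mem_toFinset] at this
                refine ⟨m - (μL A₀).toReal, by simpa using hmmem.2, ?_⟩
                intro r hr
                rcases le_or_gt r (μL A₀).toReal with h | h
                · exact Or.inl h
                · right
                  have hrmem : r ∈ hfin2.toFinset := by
                    rw [Set.Finite.mem_toFinset]; exact ⟨hr, h⟩
                  have := hfin2.toFinset.min'_le r hrmem
                  linarith
            have hbd1ne : boundaryMeasure μL A₀ + 1 ≠ ⊤ :=
              ENNReal.add_ne_top.2 ⟨hA₀bd, ENNReal.one_ne_top⟩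
            have hbdlt : boundaryMeasure μL A₀ < boundaryMeasure μL A₀ + 1 :=
              ENNReal.lt_add_right hA₀bd one_ne_zero
            have hfreq : ∃ᶠ ε in nhdsWithin (0:ℝ) (Set.Ioi 0),
                ENNReal.ofReal (((μL (Metric.thickening ε A₀)).toReal - (μL A₀).toReal)/ε)
                  < boundaryMeasure μL A₀ + 1 := by
              by_contra hcon
              rw [not_frequently] at hcon
              have hle2 : boundaryMeasure μL A₀ + 1 ≤ boundaryMeasure μL A₀ := by
                conv_rhs => rw [boundaryMeasure]
                rw [liminf_eq]
                apply le_sSup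
                exact hcon.mono fun x hx => not_lt.1 hx
              exact absurd hle2 (not_le.2 hbdlt)
            have hev2 : ∀ᶠ ε in nhdsWithin (0:ℝ) (Set.Ioi 0),
                0 < ε ∧ (boundaryMeasure μL A₀ + 1).toReal * ε < δ := by
              have htd : Tendsto (fun ε : ℝ => (boundaryMeasure μL A₀ + 1).toReal * ε)
                  (nhdsWithin 0 (Set.Ioi 0)) (nhds 0) := by
                have h1 : Tendsto (fun ε : ℝ => (boundaryMeasure μL A₀ + 1).toReal * ε)
                    (nhds 0) (nhds ((boundaryMeasure μL A₀ + 1).toReal * 0)) :=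
                  (continuous_const.mul continuous_id).tendsto 0
                rw [mul_zero] at h1
                exact h1.mono_left nhdsWithin_le_nhds
              filter_upwards [self_mem_nhdsWithin, htd.eventually_lt_const hδpos]
                with ε h1 h2
              exact ⟨h1, h2⟩
            obtain ⟨ε, hεq, hεpos, hεsmall⟩ := (hfreq.and_eventually hev2).exists
            have hGlb : (μL A₀).toReal ≤ (μL (Metric.thickening ε A₀)).toReal :=
              ENNReal.toReal_mono (measure_ne_top _ _)
                (measure_mono (Metric.self_subset_thickening hεpos A₀))
            have hquot : ((μL (Metric.thickening ε A₀)).toReal - (μL A₀).toReal)/ε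
                < (boundaryMeasure μL A₀ + 1).toReal := by
              by_contra hc
              push_neg at hc
              have h7 : boundaryMeasure μL A₀ + 1 ≤
                  ENNReal.ofReal (((μL (Metric.thickening ε A₀)).toReal - (μL A₀).toReal)/ε) := by
                calc boundaryMeasure μL A₀ + 1
                    = ENNReal.ofReal ((boundaryMeasure μL A₀ + 1).toReal) :=
                      (ENNReal.ofReal_toReal hbd1ne).symm
                  _ ≤ _ := ENNReal.ofReal_le_ofReal hc
              exact absurd hεq (not_lt.2 h7)
            have hGlt : (μL (Metric.thickening ε A₀)).toReal < (μL A₀).toReal + δ := by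
              rw [div_lt_iff₀ hεpos] at hquot
              nlinarith
            have hGeq : (μL (Metric.thickening ε A₀)).toReal = (μL A₀).toReal := by
              rcases hδgap _ ⟨Metric.thickening ε A₀,
                Metric.isOpen_thickening.measurableSet, rfl⟩ with h | h
              · exact le_antisymm h hGlb
              · linarith
            have hbd0 : boundaryMeasure μL A₀ ≤ 0 := by
              rw [boundaryMeasure]
              have hIoc : Set.Ioc (0:ℝ) ε ∈ nhdsWithin (0:ℝ) (Set.Ioi 0) :=
                mem_nhdsGT_iff_exists_Ioc_subset.mpr ⟨ε, hεpos, subset_rfl⟩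
              have hevz : ∀ᶠ ε' in nhdsWithin (0:ℝ) (Set.Ioi 0),
                  ENNReal.ofReal (((μL (Metric.thickening ε' A₀)).toReal - (μL A₀).toReal)/ε')
                    = 0 := by
                filter_upwards [hIoc] with ε' hε'
                have hm1 : (μL A₀).toReal ≤ (μL (Metric.thickening ε' A₀)).toReal :=
                  ENNReal.toReal_mono (measure_ne_top _ _)
                    (measure_mono (Metric.self_subset_thickening hε'.1 A₀))
                have hm2 : (μL (Metric.thickening ε' A₀)).toReal
                    ≤ (μL (Metric.thickening ε A₀)).toReal :=
                  ENNReal.toReal_mono (measure_ne_top _ _)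
                    (measure_mono (Metric.thickening_mono hε'.2 A₀))
                rw [hGeq] at hm2
                have h8 : (μL (Metric.thickening ε' A₀)).toReal = (μL A₀).toReal :=
                  le_antisymm hm2 hm1
                rw [h8]
                simp
              have h9 : liminf (fun ε' : ℝ =>
                  ENNReal.ofReal (((μL (Metric.thickening ε' A₀)).toReal - (μL A₀).toReal)/ε'))
                  (nhdsWithin 0 (Set.Ioi 0)) = liminf (fun _ : ℝ => (0:ENNReal))
                  (nhdsWithin 0 (Set.Ioi 0)) := liminf_congr hevz
              rw [h9, liminf_const]
            have hbdeq : boundaryMeasure μL A₀ = 0 := le_antisymm hbd0 zero_le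
            have hch := hDC A₀ hA₀meas
            rw [hbdeq, le_zero_iff, ENNReal.ofReal_eq_zero] at hch
            exact absurd hch (not_le.2 (mul_pos hDpos' hA₀min))

        nlinarith
      · have h1 := hproflb D hD0 hDC (1 / 2) (by linarith) (by linarith)
        have harg : min ((1:ℝ) / 2 - (1 - qr)) (qr - 1 / 2) = qr - 1 / 2 := by
          have he : (1:ℝ) / 2 - (1 - qr) = qr - 1 / 2 := by ring
          rw [he, min_self]
        rw [harg] at h1
        have h2 : ENNReal.ofReal (D * (2 * p - 1) / 2) ≤ isoProfile μK (1 / 2) := by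
          refine le_trans (ENNReal.ofReal_le_ofReal ?_) h1
          have he2 : p * (D * ((qr - 1 / 2) / qr)) = p * D * (qr - 1 / 2) / qr := by ring
          rw [he2, div_le_div_iff₀ (by norm_num : (0:ℝ) < 2) hqr0]
          nlinarith [mul_le_mul_of_nonneg_left hqrp hD0]
        have h3 := (ENNReal.ofReal_le_iff_le_toReal hprof).1 h2
        rw [← hcdef] at h3
        linarith
    have hub : ∀ D ∈ SS, D ≤ 2 * c / (2 * p - 1) := by
      intro D hD
      rw [le_div_iff₀ h2p]
      have := hDle D hD
      linarith
    have hsup := Real.sSup_le hub (by positivity)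
    rw [hcc]
    calc (2 * p - 1) * sSup SS ≤ (2 * p - 1) * (2 * c / (2 * p - 1)) :=
        mul_le_mul_of_nonneg_left hsup h2p.le
      _ = 2 * c := by field_simp
end

section
/- Semigroup L¹ commutation estimate implies isoperimetric lower bound (final optimization step): let 0 < μ(A) < 1, p ≥ 1, q ≥ 2, D > 0 and suppose that for every t > 0, √(2t)·μ⁺(A) ≥ 2[μ(A)(1−μ(A)) − (1/(√(2t)·D))·‖χ_A − μ(A)‖_{L^q(μ)}·‖χ_A − μ(A)‖_{L^{p*}(μ)}], where p* is the Hölder conjugate of p. Using ‖χ_A − μ(A)‖_{L^s(μ)} ≤ 2(μ(A)(1−μ(A)))^{1/s} for s ≥ 1 and choosing t = (32/D²)·(μ(A)(1−μ(A)))^{2(1/q − 1/p)}, one obtains μ⁺(A) ≥ (D/8)·(μ(A)(1−μ(A)))^{2 − 1/q − 1/p*}, and hence, if r := 1 + 1/p − 1/q ≤ 2, μ⁺(A) ≥ (D/(8·2^r))·min(μ(A), 1−μ(A))^r. -/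
/-- final optimization step of the semigroup argument: if `a = μ(A) ∈ (0,1)`,
`B = μ⁺(A)`, `p ≥ 1`, `q ≥ 2`, `D > 0`, `Nq = ‖χ_A − a‖_{L^q}` and
`Np = ‖χ_A − a‖_{L^{p*}}` satisfy `N_s ≤ 2(a(1−a))^{1/s}` (with `1/p* = 1 − 1/p`), and for
every `t > 0` one has `√(2t)·B ≥ 2[a(1−a) − Nq·Np/(√(2t)·D)]`, then, with
`r = 1 + 1/p − 1/q ≤ 2`, `B ≥ (D/8)·(a(1−a))^r ≥ (D/(8·2^r))·min(a,1−a)^r`. -/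
theorem semigroup_optimization_step (a B D p q Nq Np : ℝ)
    (ha : a ∈ Set.Ioo (0 : ℝ) 1) (hp : 1 ≤ p) (hq : 2 ≤ q) (hD : 0 < D)
    (hB : 0 ≤ B) (hNq0 : 0 ≤ Nq) (hNp0 : 0 ≤ Np)
    (hNq : Nq ≤ 2 * (a * (1 - a)) ^ (1 / q))
    (hNp : Np ≤ 2 * (a * (1 - a)) ^ (1 - 1 / p))
    (hmain : ∀ t > (0 : ℝ),
      2 * (a * (1 - a) - 1 / (Real.sqrt (2 * t) * D) * Nq * Np) ≤ Real.sqrt (2 * t) * B)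
    (hr : 1 + 1 / p - 1 / q ≤ 2) :
    D / 8 * (a * (1 - a)) ^ (1 + 1 / p - 1 / q) ≤ B ∧
      D / (8 * 2 ^ (1 + 1 / p - 1 / q)) * (min a (1 - a)) ^ (1 + 1 / p - 1 / q) ≤ B := by
  obtain ⟨ha0, ha1⟩ := ha
  set m : ℝ := a * (1 - a) with hm_def
  have hm : 0 < m := mul_pos ha0 (by linarith)
  set r : ℝ := 1 + 1 / p - 1 / q with hr_def
  have hp0 : 0 < p := lt_of_lt_of_le one_pos hp
  have hq0 : 0 < q := lt_of_lt_of_le two_pos hq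
  have hr0 : 0 < r := by
    have h1 : 1 / q ≤ 1 / 2 := by
      apply div_le_div_of_nonneg_left <;> linarith
    have h2 : 0 ≤ 1 / p := by positivity
    rw [hr_def]; linarith
  -- choose s = (8/D) * m^(1-r)
  set s : ℝ := 8 / D * m ^ (1 - r) with hs_def
  have hmr : (0:ℝ) < m ^ (1 - r) := Real.rpow_pos_of_pos hm _
  have hs : 0 < s := by positivity
  have hsqrt : Real.sqrt (2 * (s ^ 2 / 2)) = s := by
    rw [show 2 * (s ^ 2 / 2) = s ^ 2 by ring, Real.sqrt_sq hs.le]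
  have hkey := hmain (s ^ 2 / 2) (by positivity)
  rw [hsqrt] at hkey
  -- bound Nq * Np
  have hNqNp : Nq * Np ≤ 4 * m ^ (2 - r) := by
    have h1 : Nq * Np ≤ (2 * m ^ (1 / q)) * (2 * m ^ (1 - 1 / p)) :=
      mul_le_mul hNq hNp hNp0 (by positivity)
    calc Nq * Np ≤ 4 * (m ^ (1 / q) * m ^ (1 - 1 / p)) := by linarith [h1]
      _ = 4 * m ^ (2 - r) := by
          have hexp : 1 / q + (1 - 1 / p) = 2 - r := by rw [hr_def]; ring
          rw [← Real.rpow_add hm, hexp]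
  have hsD : s * D = 8 * m ^ (1 - r) := by
    rw [hs_def]; field_simp
  have h2r : m ^ (2 - r) = m ^ (1 - r) * m := by
    rw [← Real.rpow_add_one hm.ne' (1 - r)]; ring_nf
  have hfrac : 1 / (s * D) * Nq * Np ≤ m / 2 := by
    have h3 : 1 / (s * D) * Nq * Np ≤ 1 / (s * D) * (4 * m ^ (2 - r)) := by
      rw [mul_assoc]
      apply mul_le_mul_of_nonneg_left hNqNp (by positivity)
    have h4 : 1 / (s * D) * (4 * m ^ (2 - r)) = m / 2 := by
      rw [hsD, h2r]; field_simp; ring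
    linarith
  have hm_le : m ≤ s * B := by
    have := hkey
    nlinarith [hfrac]
  -- B ≥ D/8 * m^r
  have hmain1 : D / 8 * m ^ r ≤ B := by
    have hprod : m ^ (1 - r) * m ^ r = m := by
      rw [← Real.rpow_add hm]; norm_num
    have hsm : s * (D / 8 * m ^ r) = m := by
      have h5 : s * (D / 8 * m ^ r) = m ^ (1 - r) * m ^ r * (D / D) := by
        rw [hs_def]; ring
      rw [div_self hD.ne', mul_one, hprod] at h5
      exact h5
    have : s * (D / 8 * m ^ r) ≤ s * B := by rw [hsm]; exact hm_le
    exact le_of_mul_le_mul_left this hs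
  refine ⟨hmain1, ?_⟩
  -- min a (1-a) ≤ 2 m
  have hmin : min a (1 - a) ≤ 2 * m := by
    rcases le_total a (1 - a) with h | h
    · rw [min_eq_left h]; nlinarith
    · rw [min_eq_right h]; nlinarith
  have hmin0 : 0 ≤ min a (1 - a) := le_min ha0.le (by linarith)
  have h2m : (min a (1 - a)) ^ r ≤ (2 * m) ^ r :=
    Real.rpow_le_rpow hmin0 hmin hr0.le
  have h2mr : (2 * m) ^ r = 2 ^ r * m ^ r :=
    Real.mul_rpow (by norm_num) hm.le
  have h2rpos : (0:ℝ) < 2 ^ r := Real.rpow_pos_of_pos two_pos r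
  have : D / (8 * 2 ^ r) * (min a (1 - a)) ^ r ≤ D / (8 * 2 ^ r) * (2 ^ r * m ^ r) := by
    apply mul_le_mul_of_nonneg_left (h2mr ▸ h2m) (by positivity)
  have heq : D / (8 * 2 ^ r) * (2 ^ r * m ^ r) = D / 8 * m ^ r := by
    field_simp
  linarith
end

section
/- Cheeger implies L¹ Poincaré (Maz'ya–Federer–Fleming, median form) on the real line: let μ be a probability measure on ℝ absolutely continuous with density, and suppose μ⁺(A) ≥ D·min(μ(A), 1−μ(A)) for all Borel sets A ⊆ ℝ, where μ⁺ is the Minkowski boundary measure. Then for every locally Lipschitz f : ℝ → ℝ with median 0, D·∫|f| dμ ≤ ∫|f'| dμ. -/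
open MeasureTheory Filter

open Set
open scoped NNReal ENNReal



lemma thickening_Iic {ε x : ℝ} (hε : 0 < ε) :
    Metric.thickening ε (Set.Iic x) = Set.Iio (x + ε) := by
  ext y
  simp only [Metric.mem_thickening_iff, Set.mem_Iic, Set.mem_Iio]
  constructor
  · rintro ⟨z, hz, hd⟩
    have : |y - z| < ε := by rwa [Real.dist_eq] at hd
    have := abs_lt.mp this
    linarith
  · intro hy
    refine ⟨min x y, min_le_left _ _, ?_⟩
    rw [Real.dist_eq, abs_lt]
    rcases le_total y x with h | h
    · simp [min_eq_right h]; linarith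
    · rw [min_eq_left h]
      constructor <;> linarith


lemma lipschitz_sub_eq_integral_deriv {K : ℝ≥0} {h : ℝ → ℝ} (hh : LipschitzWith K h)
    {y z : ℝ} (hyz : y ≤ z) :
    h z - h y = ∫ x in Set.Ioc y z, deriv h x := by
  have hcont : Continuous h := hh.continuous
  have hbd : ∀ a b : ℝ, a ≤ b → |h b - h a| ≤ K * (b - a) := by
    intro a b hab
    have := hh.dist_le_mul b a
    rw [Real.dist_eq, Real.dist_eq] at this
    calc |h b - h a| ≤ K * |b - a| := this
    _ = K * (b - a) := by rw [abs_of_nonneg (by linarith)]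
  -- the two monotone companion functions
  set g : ℝ → ℝ := fun x => h x + K * x with hg
  set k : ℝ → ℝ := fun x => K * x - h x with hk
  have hgmono : Monotone g := by
    intro a b hab
    have := (abs_le.mp (hbd a b hab)).1
    simp only [hg]
    nlinarith
  have hkmono : Monotone k := by
    intro a b hab
    have := (abs_le.mp (hbd a b hab)).2
    simp only [hk]
    nlinarith
  have hgcont : Continuous g := by continuity
  have hkcont : Continuous k := by continuity
  set G : StieltjesFunction ℝ := ⟨g, hgmono, fun x => hgcont.continuousWithinAt⟩ with hG
  set H : StieltjesFunction ℝ := ⟨k, hkmono, fun x => hkcont.continuousWithinAt⟩ with hH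
  have hsum : (2 * K : ℝ≥0) • (volume : Measure ℝ) = G.measure + H.measure := by
    refine Measure.ext_of_Ioc _ _ (fun a b hab => ?_)
    rw [Measure.add_apply, StieltjesFunction.measure_Ioc, StieltjesFunction.measure_Ioc]
    symm
    have h1 : (0:ℝ) ≤ g b - g a := sub_nonneg.mpr (hgmono hab.le)
    have h2 : (0:ℝ) ≤ k b - k a := sub_nonneg.mpr (hkmono hab.le)
    rw [← ENNReal.ofReal_add h1 h2, Measure.smul_apply, Real.volume_Ioc,
      ENNReal.smul_def, smul_eq_mul, ← ENNReal.ofReal_coe_nnreal,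
      ← ENNReal.ofReal_mul (by positivity)]
    congr 1
    show g b - g a + (k b - k a) = _
    simp only [hg, hk]
    push_cast
    ring
  have hle : G.measure ≤ (2 * K : ℝ≥0) • (volume : Measure ℝ) := by
    rw [hsum]; exact Measure.le_add_right le_rfl
  have hac : G.measure ≪ volume := by
    intro s hs
    refine le_antisymm ?_ (zero_le ..)
    calc G.measure s ≤ ((2 * K : ℝ≥0) • (volume: Measure ℝ)) s := hle s
    _ = 0 := by rw [Measure.smul_apply, hs, smul_zero]
  set r : ℝ → ENNReal := G.measure.rnDeriv volume with hr
  have hwd : volume.withDensity r = G.measure :=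
    Measure.withDensity_rnDeriv_eq G.measure volume hac
  have hderiv : ∀ᵐ x, HasDerivAt h ((r x).toReal - K) x := by
    filter_upwards [G.ae_hasDerivAt] with x hx
    have : HasDerivAt (fun t => g t - K * t) ((r x).toReal - K) x := by
      exact (hx.sub ((hasDerivAt_id x).const_mul (K:ℝ))).congr_deriv (by simp [hr])
    convert this using 2 with t
    simp [hg]
  have hdeq : ∀ᵐ x, deriv h x = (r x).toReal - K := by
    filter_upwards [hderiv] with x hx using hx.deriv
  have hrmeas : Measurable r := Measure.measurable_rnDeriv _ _
  have hIoclt : G.measure (Set.Ioc y z) ≠ ⊤ := by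
    rw [StieltjesFunction.measure_Ioc]; exact ENNReal.ofReal_ne_top
  have hlint : ∫⁻ x in Set.Ioc y z, r x ∂volume = G.measure (Set.Ioc y z) := by
    rw [← withDensity_apply r measurableSet_Ioc, hwd]
  have hint_r : IntegrableOn (fun x => (r x).toReal) (Set.Ioc y z) volume := by
    refine integrable_toReal_of_lintegral_ne_top hrmeas.aemeasurable ?_
    rw [hlint]; exact hIoclt
  have hrlt : ∀ᵐ x ∂(volume.restrict (Set.Ioc y z)), r x < ⊤ :=
    ae_restrict_of_ae (Measure.rnDeriv_lt_top _ _)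
  have hieq : ∫ x in Set.Ioc y z, deriv h x = ∫ x in Set.Ioc y z, ((r x).toReal - K) := by
    refine integral_congr_ae (ae_restrict_of_ae ?_)
    filter_upwards [hdeq] with x hx using hx
  rw [hieq, integral_sub hint_r ((integrableOn_const_iff).mpr (Or.inr (by simp)))]
  rw [integral_toReal hrmeas.aemeasurable hrlt, hlint, StieltjesFunction.measure_Ioc]
  have hgz : (0:ℝ) ≤ g z - g y := sub_nonneg.mpr (hgmono hyz)
  rw [ENNReal.toReal_ofReal hgz]
  rw [setIntegral_const, Real.volume_real_Ioc_of_le hyz]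
  simp only [hg, smul_eq_mul]
  ring


-- bound on deriv from a Lipschitz bound on a neighborhood
lemma abs_deriv_le_of_lip {f : ℝ → ℝ} {K : ℝ≥0} {s : Set ℝ} {y : ℝ}
    (hs : s ∈ nhds y) (hlip : LipschitzOnWith K f s) : |deriv f y| ≤ K := by
  have h1 : ‖fderiv ℝ f y‖ ≤ K := norm_fderiv_le_of_lipschitzOn ℝ hs hlip
  have h2 : deriv f y = fderiv ℝ f y 1 := rfl
  calc |deriv f y| = ‖fderiv ℝ f y 1‖ := by rw [h2]; rfl
  _ ≤ ‖fderiv ℝ f y‖ * ‖(1:ℝ)‖ := (fderiv ℝ f y).le_opNorm 1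
  _ ≤ K := by simpa using h1

lemma locallyLipschitz_bound_on_Icc {f : ℝ → ℝ} (hf : LocallyLipschitz f) (a b : ℝ) :
    ∃ K : ℝ≥0, ∀ x ∈ Set.Icc a b, |deriv f x| ≤ K := by
  choose K t ht hlip using hf
  have hcov : Set.Icc a b ⊆ ⋃ y ∈ Set.Icc a b, interior (t y) := fun x hx =>
    Set.mem_biUnion hx (mem_interior_iff_mem_nhds.mpr (ht x))
  obtain ⟨s, hsub, hfin, hcov'⟩ := (isCompact_Icc (a := a) (b := b)).elim_finite_subcover_image
    (fun y _ => isOpen_interior) hcov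
  refine ⟨hfin.toFinset.sup K, fun x hx => ?_⟩
  obtain ⟨y, hy, hxy⟩ := Set.mem_iUnion₂.mp (hcov' hx)
  have hnb : t y ∈ nhds x :=
    mem_nhds_iff.mpr ⟨interior (t y), interior_subset, isOpen_interior, hxy⟩
  have h1 : |deriv f x| ≤ K y := abs_deriv_le_of_lip hnb (hlip y)
  exact h1.trans (by exact_mod_cast NNReal.coe_le_coe.mpr (Finset.le_sup (hfin.mem_toFinset.mpr hy)))

lemma locallyLipschitz_integrableOn_abs_deriv {f : ℝ → ℝ} (hf : LocallyLipschitz f) {a b : ℝ} :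
    IntegrableOn (fun x => |deriv f x|) (Set.Ioc a b) := by
  obtain ⟨K, hK⟩ := locallyLipschitz_bound_on_Icc hf a b
  have hmeas : Measurable fun x => |deriv f x| := (measurable_deriv f).abs
  refine Integrable.mono' (g := fun _ => (K:ℝ))
    ((integrableOn_const_iff).mpr (Or.inr (by simp))) hmeas.aestronglyMeasurable.restrict ?_
  refine (ae_restrict_iff' measurableSet_Ioc).mpr (ae_of_all _ fun x hx => ?_)
  rw [Real.norm_eq_abs, abs_abs]
  exact hK x ⟨hx.1.le, hx.2⟩

lemma step_lip {f : ℝ → ℝ} {K : ℝ≥0} {x δ : ℝ} (hδ : 0 < δ)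
    (hlip : LipschitzOnWith K f (Metric.ball x δ)) {u v : ℝ}
    (hu : u ∈ Metric.ball x (δ/2)) (hv : v ∈ Metric.ball x (δ/2)) (huv : u ≤ v) :
    |f v - f u| ≤ ∫ t in Set.Ioc u v, |deriv f t| := by
  set c' := x - 3*δ/4 with hc'
  set d' := x + 3*δ/4 with hd'
  have hIccball : Set.Icc c' d' ⊆ Metric.ball x δ := by
    intro z hz
    rw [Metric.mem_ball, Real.dist_eq, abs_lt]
    rcases hz with ⟨h1, h2⟩
    constructor <;> simp only [hc', hd'] at h1 h2 <;> linarith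
  have humem : u ∈ Set.Ioo c' d' := by
    rw [Metric.mem_ball, Real.dist_eq, abs_lt] at hu
    constructor <;> simp only [hc', hd'] <;> linarith [hu.1, hu.2]
  have hvmem : v ∈ Set.Ioo c' d' := by
    rw [Metric.mem_ball, Real.dist_eq, abs_lt] at hv
    constructor <;> simp only [hc', hd'] <;> linarith [hv.1, hv.2]
  set π : ℝ → ℝ := fun z => max c' (min d' z) with hπ
  have hπmem : ∀ z, π z ∈ Set.Icc c' d' := by
    intro z
    constructor
    · exact le_max_left _ _
    · simp only [hπ, max_le_iff]
      exact ⟨by simp only [hc', hd']; linarith, (min_le_left _ _)⟩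
  have hπid : ∀ z ∈ Set.Icc c' d', π z = z := by
    intro z hz
    simp only [hπ, min_eq_right hz.2, max_eq_right hz.1]
  have hπlip : ∀ z1 z2 : ℝ, dist (π z1) (π z2) ≤ dist z1 z2 := by
    intro z1 z2
    simp only [hπ, Real.dist_eq]
    calc |max c' (min d' z1) - max c' (min d' z2)|
        = |max (min d' z1) c' - max (min d' z2) c'| := by rw [max_comm c', max_comm c']
    _ ≤ |min d' z1 - min d' z2| := abs_max_sub_max_le_abs _ _ _
    _ ≤ max |d' - d'| |z1 - z2| := abs_min_sub_min_le_max _ _ _ _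
    _ = |z1 - z2| := by simp
  have he : LipschitzWith K (f ∘ π) := by
    refine LipschitzWith.of_dist_le_mul fun z1 z2 => ?_
    calc dist (f (π z1)) (f (π z2)) ≤ K * dist (π z1) (π z2) :=
      hlip.dist_le_mul _ (hIccball (hπmem z1)) _ (hIccball (hπmem z2))
    _ ≤ K * dist z1 z2 := by
      exact mul_le_mul_of_nonneg_left (hπlip z1 z2) (by positivity)
  have hde : ∀ z ∈ Set.Ioo c' d', deriv (f ∘ π) z = deriv f z := by
    intro z hz
    refine Filter.EventuallyEq.deriv_eq ?_
    filter_upwards [isOpen_Ioo.mem_nhds hz] with w hw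
    simp only [Function.comp_apply, hπid w (Set.Ioo_subset_Icc_self hw)]
  have heq : f v - f u = ∫ t in Set.Ioc u v, deriv (f ∘ π) t := by
    have := lipschitz_sub_eq_integral_deriv he huv
    simpa only [Function.comp_apply, hπid u (Set.Ioo_subset_Icc_self humem),
      hπid v (Set.Ioo_subset_Icc_self hvmem)] using this
  have hIocsub : Set.Ioc u v ⊆ Set.Ioo c' d' := fun z hz =>
    ⟨lt_of_lt_of_le humem.1 hz.1.le, lt_of_le_of_lt hz.2 hvmem.2⟩
  calc |f v - f u| = |∫ t in Set.Ioc u v, deriv (f ∘ π) t| := by rw [heq]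
  _ ≤ ∫ t in Set.Ioc u v, |deriv (f ∘ π) t| := by
      simpa only [Real.norm_eq_abs] using
        norm_integral_le_integral_norm (f := fun t => deriv (f ∘ π) t)
          (μ := volume.restrict (Set.Ioc u v))
  _ = ∫ t in Set.Ioc u v, |deriv f t| := by
      refine setIntegral_congr_ae measurableSet_Ioc (ae_of_all _ fun z hz => ?_)
      rw [hde z (hIocsub hz)]

lemma locallyLipschitz_abs_sub_le_integral {f : ℝ → ℝ} (hf : LocallyLipschitz f)
    {a b : ℝ} (hab : a ≤ b) : |f b - f a| ≤ ∫ t in Set.Ioc a b, |deriv f t| := by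
  obtain ⟨K, hK⟩ := locallyLipschitz_bound_on_Icc hf a b
  set ψ : ℝ → ℝ := fun t => ∫ s in Set.Ioc a t, |deriv f s| with hψ
  have hψadd : ∀ t ∈ Set.Icc a b, ∀ t' ∈ Set.Icc a b, t ≤ t' →
      ψ t' = ψ t + ∫ s in Set.Ioc t t', |deriv f s| := by
    intro t ht t' ht' htt'
    have : Set.Ioc a t ∪ Set.Ioc t t' = Set.Ioc a t' := Set.Ioc_union_Ioc_eq_Ioc ht.1 htt'
    rw [hψ]
    simp only
    rw [← this, setIntegral_union (Set.Ioc_disjoint_Ioc_of_le le_rfl) measurableSet_Ioc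
      (locallyLipschitz_integrableOn_abs_deriv hf) (locallyLipschitz_integrableOn_abs_deriv hf)]
  have hbnd : ∀ t ∈ Set.Icc a b, ∀ t' ∈ Set.Icc a b, t ≤ t' →
      ∫ s in Set.Ioc t t', |deriv f s| ≤ K * (t' - t) := by
    intro t ht t' ht' htt'
    calc ∫ s in Set.Ioc t t', |deriv f s| ≤ ∫ _ in Set.Ioc t t', (K:ℝ) := by
          refine setIntegral_mono_on (locallyLipschitz_integrableOn_abs_deriv hf)
            ((integrableOn_const_iff).mpr (Or.inr (by simp))) measurableSet_Ioc fun s hs => ?_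
          exact hK s ⟨le_trans ht.1 hs.1.le, le_trans hs.2 ht'.2⟩
    _ = K * (t' - t) := by
          rw [setIntegral_const, Real.volume_real_Ioc_of_le htt', smul_eq_mul,
            mul_comm]
  have hψlip : LipschitzOnWith K ψ (Set.Icc a b) := by
    refine LipschitzOnWith.of_dist_le_mul fun t ht t' ht' => ?_
    rw [Real.dist_eq, Real.dist_eq]
    rcases le_total t t' with h | h
    · rw [hψadd t ht t' ht' h]
      have h1 : (0:ℝ) ≤ ∫ s in Set.Ioc t t', |deriv f s| :=
        setIntegral_nonneg measurableSet_Ioc fun s _ => abs_nonneg _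
      have h2 := hbnd t ht t' ht' h
      rw [abs_sub_comm, add_sub_cancel_left, abs_of_nonneg h1, abs_sub_comm,
        abs_of_nonneg (by linarith : (0:ℝ) ≤ t' - t)]
      exact h2
    · rw [hψadd t' ht' t ht h]
      have h1 : (0:ℝ) ≤ ∫ s in Set.Ioc t' t, |deriv f s| :=
        setIntegral_nonneg measurableSet_Ioc fun s _ => abs_nonneg _
      have h2 := hbnd t' ht' t ht h
      rw [add_sub_cancel_left, abs_of_nonneg h1, abs_of_nonneg (by linarith : (0:ℝ) ≤ t - t')]
      exact h2
  set S : Set ℝ := {t | |f t - f a| ≤ ψ t} with hS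
  have hclosed : IsClosed (S ∩ Set.Icc a b) := by
    have : S ∩ Set.Icc a b = {t ∈ Set.Icc a b | |f t - f a| ≤ ψ t} := by
      ext t; exact ⟨fun ⟨h1, h2⟩ => ⟨h2, h1⟩, fun ⟨h1, h2⟩ => ⟨h2, h1⟩⟩
    rw [this]
    exact IsClosed.isClosed_le isClosed_Icc
      ((hf.continuous.sub continuous_const).abs.continuousOn) hψlip.continuousOn
  have hmem : Set.Icc a b ⊆ S := by
    refine hclosed.Icc_subset_of_forall_exists_gt ?_ fun t ht y hy => ?_
    · simp only [hS, Set.mem_setOf_eq, sub_self, abs_zero, hψ]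
      simp
    · -- extend to the right
      obtain ⟨Kl, s, hs, hlip⟩ := hf t
      obtain ⟨δ, hδ, hball⟩ := Metric.mem_nhds_iff.mp hs
      set v := min (min y b) (t + δ/4) with hv
      have htv : t < v := by
        refine lt_min (lt_min hy ht.2.2) (by linarith)
      have hvb : v ≤ b := le_trans (min_le_left _ _) (min_le_right _ _)
      have hvy : v ≤ y := le_trans (min_le_left _ _) (min_le_left _ _)
      refine ⟨v, ?_, htv, hvy⟩
      have hstep : |f v - f t| ≤ ∫ s in Set.Ioc t v, |deriv f s| := by
        refine step_lip hδ (hlip.mono hball) ?_ ?_ htv.le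
        · simp [Metric.mem_ball, Real.dist_eq]; linarith
        · rw [Metric.mem_ball, Real.dist_eq, abs_lt]
          have h1 : v ≤ t + δ/4 := min_le_right _ _
          constructor <;> linarith
      have htS : |f t - f a| ≤ ψ t := ht.1
      have hta : t ∈ Set.Icc a b := ⟨ht.2.1, ht.2.2.le⟩
      have hvab : v ∈ Set.Icc a b := ⟨le_trans ht.2.1 htv.le, hvb⟩
      simp only [hS, Set.mem_setOf_eq]
      calc |f v - f a| ≤ |f t - f a| + |f v - f t| := by
            rw [abs_sub_comm (f v) (f t)]
            exact (abs_sub _ _).trans_eq' (by ring_nf)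
      _ ≤ ψ t + ∫ s in Set.Ioc t v, |deriv f s| := add_le_add htS hstep
      _ = ψ v := (hψadd t hta v hvab htv.le).symm
  have := hmem ⟨hab, le_refl b⟩
  exact this

lemma cheeger_density_bound (μ : Measure ℝ) [IsProbabilityMeasure μ]
    (habs : μ ≪ volume) {D : ℝ}
    (hche : ∀ A : Set ℝ, MeasurableSet A →
      ENNReal.ofReal (D * min (μ A).toReal (1 - (μ A).toReal)) ≤ boundaryMeasure μ A) :
    ∀ᵐ x ∂volume,
      D * min ((μ (Set.Iic x)).toReal) (1 - (μ (Set.Iic x)).toReal)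
        ≤ (μ.rnDeriv volume x).toReal := by
  haveI : NullSingletonClass μ := ⟨fun x => habs Real.volume_singleton⟩
  have hIioIic : ∀ y : ℝ, μ (Set.Iio y) = μ (Set.Iic y) := by
    intro y
    rw [← Set.Iio_union_right, measure_union (by simp) (measurableSet_singleton y),
      measure_singleton, add_zero]
  have hmc := ProbabilityTheory.measure_cdf (μ := μ)
  filter_upwards [(ProbabilityTheory.cdf μ).ae_hasDerivAt] with x hx
  rw [hmc] at hx
  set ρx : ℝ := (μ.rnDeriv volume x).toReal with hρx
  -- the difference quotient tends to ρx
  have hmap : Tendsto (fun ε : ℝ => x + ε) (nhdsWithin 0 (Set.Ioi 0)) (nhdsWithin x {x}ᶜ) := by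
    refine tendsto_nhdsWithin_of_tendsto_nhds_of_eventually_within _ ?_ ?_
    · have : Tendsto (fun ε : ℝ => x + ε) (nhds 0) (nhds (x + 0)) :=
        (continuous_const.add continuous_id).tendsto 0
      simpa using this.mono_left nhdsWithin_le_nhds
    · filter_upwards [self_mem_nhdsWithin] with ε (hε : ε ∈ Set.Ioi 0)
      simp only [Set.mem_compl_iff, Set.mem_singleton_iff]
      intro hcon
      have : ε = 0 := by linarith [Set.mem_Ioi.mp hε, congrArg (fun z => z - x) hcon]
      exact absurd this (ne_of_gt (Set.mem_Ioi.mp hε))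
  have hslope : Tendsto (fun ε : ℝ => (ProbabilityTheory.cdf μ (x + ε) -
      ProbabilityTheory.cdf μ x) / ε) (nhdsWithin 0 (Set.Ioi 0)) (nhds ρx) := by
    have h1 := (hasDerivAt_iff_tendsto_slope.mp hx).comp hmap
    refine h1.congr fun ε => ?_
    rw [Function.comp_apply, slope_def_field]
    rw [add_sub_cancel_left]
  have hq : Tendsto (fun ε : ℝ =>
      ((μ (Metric.thickening ε (Set.Iic x))).toReal - (μ (Set.Iic x)).toReal) / ε)
      (nhdsWithin 0 (Set.Ioi 0)) (nhds ρx) := by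
    refine hslope.congr' ?_
    filter_upwards [self_mem_nhdsWithin] with ε (hε : ε ∈ Set.Ioi 0)
    rw [thickening_Iic (Set.mem_Ioi.mp hε), hIioIic,
      ProbabilityTheory.cdf_eq_real, ProbabilityTheory.cdf_eq_real,
      measureReal_def, measureReal_def]
  have hbm : boundaryMeasure μ (Set.Iic x) = ENNReal.ofReal ρx := by
    refine Filter.Tendsto.liminf_eq ?_
    exact (ENNReal.continuous_ofReal.tendsto ρx).comp hq
  have := hche (Set.Iic x) measurableSet_Iic
  rw [hbm] at this
  exact (ENNReal.ofReal_le_ofReal_iff ENNReal.toReal_nonneg).mp this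

lemma exists_median (μ : Measure ℝ) [IsProbabilityMeasure μ] [NullSingletonClass μ] :
    ∃ p : ℝ, (μ (Set.Iic p)).toReal = 1/2 := by
  set F : ℝ → ℝ := fun x => ProbabilityTheory.cdf μ x with hF
  have hFeq : ∀ x, F x = (μ (Set.Iic x)).toReal := fun x => (ProbabilityTheory.cdf_eq_real μ x).trans (measureReal_def _ _)
  have hmono : Monotone F := fun a b h => ProbabilityTheory.monotone_cdf μ h
  set S : Set ℝ := {x | 1/2 ≤ F x} with hS
  have hS_ne : S.Nonempty := by
    have h1 : ∀ᶠ x in atTop, (1/2:ℝ) < F x :=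
      (ProbabilityTheory.tendsto_cdf_atTop μ).eventually_const_lt (by norm_num)
    obtain ⟨x, hx⟩ := h1.exists
    exact ⟨x, hx.le⟩
  have hbdd : BddBelow S := by
    have h1 : ∀ᶠ x in atBot, F x < 1/2 :=
      (ProbabilityTheory.tendsto_cdf_atBot μ).eventually_lt_const (by norm_num)
    obtain ⟨a, ha⟩ := h1.exists
    refine ⟨a, fun y hy => ?_⟩
    by_contra hlt
    push_neg at hlt
    exact absurd (le_trans hy (hmono hlt.le)) (not_le.mpr ha)
  set p := sInf S with hp
  have hup : (1:ℝ)/2 ≤ F p := by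
    -- sequence from the right
    have hseq : ∀ n : ℕ, ∃ x ∈ S, x < p + 1/(n+1) := by
      intro n
      have hpos : (0:ℝ) < 1/(n+1) := by positivity
      exact csInf_lt_iff hbdd hS_ne |>.mp (by linarith : p < p + 1/(n+1)) |>.imp
        fun x ⟨h1, h2⟩ => ⟨h1, h2⟩
    choose xs hxsS hxslt using hseq
    have hxs_ge : ∀ n, p ≤ xs n := fun n => csInf_le hbdd (hxsS n)
    have hxs_tendsto : Tendsto xs atTop (nhds p) := by
      refine tendsto_of_tendsto_of_tendsto_of_le_of_le (g := fun _ => p)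
        (h := fun n : ℕ => p + 1/(n+1)) tendsto_const_nhds ?_ hxs_ge (fun n => (hxslt n).le)
      have : Tendsto (fun n : ℕ => 1/((n:ℝ)+1)) atTop (nhds 0) := tendsto_one_div_add_atTop_nhds_zero_nat
      simpa using tendsto_const_nhds.add this
    have hcont : ContinuousWithinAt F (Set.Ici p) p :=
      (ProbabilityTheory.cdf μ).right_continuous p
    have hFx_tendsto : Tendsto (fun n => F (xs n)) atTop (nhds (F p)) := by
      refine hcont.tendsto.comp ?_
      refine tendsto_nhdsWithin_of_tendsto_nhds_of_eventually_within _ hxs_tendsto ?_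
      exact Filter.Eventually.of_forall fun n => hxs_ge n
    exact ge_of_tendsto hFx_tendsto (Filter.Eventually.of_forall fun n => hxsS n)
  have hdn : F p ≤ 1/2 := by
    -- consider left approximations
    · 
      have hseq : Tendsto (fun n : ℕ => μ (Set.Iic (p - 1/(n+1)))) atTop (nhds (μ (Set.Iio p))) := by
        have hunion : Set.Iio p = ⋃ n : ℕ, Set.Iic (p - 1/(n+1)) := by
          ext z
          simp only [Set.mem_Iio, Set.mem_iUnion, Set.mem_Iic]
          constructor
          · intro hz
            obtain ⟨n, hn⟩ := exists_nat_one_div_lt (by linarith : (0:ℝ) < p - z)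
            exact ⟨n, by linarith⟩
          · rintro ⟨n, hn⟩
            have : (0:ℝ) < 1/(n+1) := by positivity
            linarith
        rw [hunion]
        refine tendsto_measure_iUnion_atTop ?_
        intro m n hmn
        refine Set.Iic_subset_Iic.mpr ?_
        have : 1/((n:ℝ)+1) ≤ 1/((m:ℝ)+1) := by
          apply one_div_le_one_div_of_le (by positivity)
          exact_mod_cast by omega
        linarith
      have hIioIic : μ (Set.Iio p) = μ (Set.Iic p) := by
        rw [← Set.Iio_union_right, measure_union (by simp) (measurableSet_singleton p),
          measure_singleton, add_zero]
      have hfin : μ (Set.Iio p) ≠ ⊤ := measure_ne_top μ _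
      have hreal : Tendsto (fun n : ℕ => (μ (Set.Iic (p - 1/(n+1)))).toReal) atTop
          (nhds ((μ (Set.Iio p)).toReal)) :=
        (ENNReal.tendsto_toReal hfin).comp hseq
      have hle : ∀ n : ℕ, (μ (Set.Iic (p - 1/(n+1)))).toReal ≤ 1/2 := by
        intro n
        have hlt : p - 1/(n+1) < p := by
          have : (0:ℝ) < 1/(n+1) := by positivity
          linarith
        have : p - 1/(n+1) ∉ S := fun hmem => absurd (csInf_le hbdd hmem) (not_le.mpr hlt)
        rw [← hFeq]
        exact le_of_not_ge (by simpa [hS] using this)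
      have := le_of_tendsto hreal (Filter.Eventually.of_forall hle)
      rw [hIioIic, ← hFeq] at this
      exact this
  exact ⟨p, by rw [← hFeq]; linarith⟩

lemma integral_abs_le_integral_abs_sub_median {μ : Measure ℝ} [IsProbabilityMeasure μ]
    {f : ℝ → ℝ} (hfm : Measurable f) (hintf : Integrable f μ)
    (hmed₁ : (1 / 2 : ENNReal) ≤ μ {x | 0 ≤ f x})
    (hmed₂ : (1 / 2 : ENNReal) ≤ μ {x | f x ≤ 0}) (c : ℝ) :
    ∫ x, |f x| ∂μ ≤ ∫ x, |f x - c| ∂μ := by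
  have hint_fc : Integrable (fun x => |f x - c|) μ := (hintf.sub (integrable_const c)).abs
  have hint_f : Integrable (fun x => |f x|) μ := hintf.abs
  have hint_g : Integrable (fun x => |f x - c| - |f x|) μ := hint_fc.sub hint_f
  have hms_pos : MeasurableSet {x : ℝ | 0 < f x} := measurableSet_lt measurable_const hfm
  have hms_neg : MeasurableSet {x : ℝ | f x < 0} := measurableSet_lt hfm measurable_const
  have hms_le : MeasurableSet {x : ℝ | f x ≤ 0} := measurableSet_le hfm measurable_const
  have hms_ge : MeasurableSet {x : ℝ | 0 ≤ f x} := measurableSet_le measurable_const hfm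
  have key : 0 ≤ ∫ x, (|f x - c| - |f x|) ∂μ := by
    rcases le_total 0 c with hc | hc
    · -- c ≥ 0
      set ψ : ℝ → ℝ := fun x => c - (2*c) * Set.indicator {x | 0 < f x} (fun _ => (1:ℝ)) x with hψ
      have hψint : Integrable ψ μ := by
        refine (integrable_const c).sub (Integrable.const_mul ?_ (2*c))
        refine (integrable_indicator_iff hms_pos).mpr ?_
        exact (integrableOn_const_iff).mpr (Or.inr (measure_lt_top μ _))
      have hψle : ∀ x, ψ x ≤ |f x - c| - |f x| := by
        intro x
        rcases le_or_gt (f x) 0 with h | h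
        · have hind : Set.indicator {x | 0 < f x} (fun _ => (1:ℝ)) x = 0 :=
            Set.indicator_of_notMem (by simp [not_lt.mpr h]) _
          rw [hψ]; simp only [hind, mul_zero, sub_zero]
          rw [abs_of_nonpos h, abs_of_nonpos (by linarith)]
          linarith
        · have hind : Set.indicator {x | 0 < f x} (fun _ => (1:ℝ)) x = 1 :=
            Set.indicator_of_mem (by simpa using h) _
          rw [hψ]; simp only [hind, mul_one]
          have h1 := abs_sub_abs_le_abs_sub (f x) c
          have habs : |c| = c := abs_of_nonneg hc
          linarith
      have hψint_eq : ∫ x, ψ x ∂μ = c - (2*c) * (μ {x | 0 < f x}).toReal := by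
        rw [hψ, integral_sub (integrable_const c) (Integrable.const_mul ((integrable_indicator_iff hms_pos).mpr ((integrableOn_const_iff).mpr (Or.inr (measure_lt_top μ _)))) (2*c)),
          integral_const, integral_const_mul, integral_indicator hms_pos]
        simp [measure_univ, measureReal_def]
      have hμlt : (μ {x | 0 < f x}).toReal ≤ 1/2 := by
        have hcompl : {x : ℝ | 0 < f x} = {x : ℝ | f x ≤ 0}ᶜ := by
          ext x; simp [not_le]
        have h1 : μ {x | 0 < f x} ≤ 1/2 := by
          rw [hcompl, measure_compl hms_le (measure_ne_top μ _)]
          rw [measure_univ]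
          refine tsub_le_iff_right.mpr ?_
          calc (1:ENNReal) = 1/2 + 1/2 := by rw [ENNReal.add_halves]
          _ ≤ 1/2 + μ {x | f x ≤ 0} := by exact add_le_add_right hmed₂ _
        calc (μ {x | 0 < f x}).toReal ≤ ((1:ENNReal)/2).toReal :=
          ENNReal.toReal_mono (by norm_num) h1
        _ = 1/2 := by norm_num
      calc (0:ℝ) ≤ c - (2*c) * (1/2) := by linarith
      _ ≤ c - (2*c) * (μ {x | 0 < f x}).toReal := by nlinarith
      _ = ∫ x, ψ x ∂μ := hψint_eq.symm
      _ ≤ ∫ x, (|f x - c| - |f x|) ∂μ := integral_mono hψint hint_g hψle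
    · -- c ≤ 0
      set ψ : ℝ → ℝ := fun x => -c + (2*c) * Set.indicator {x | f x < 0} (fun _ => (1:ℝ)) x with hψ
      have hindint : Integrable (Set.indicator {x | f x < 0} (fun _ => (1:ℝ))) μ := by
        refine (integrable_indicator_iff hms_neg).mpr ?_
        exact (integrableOn_const_iff).mpr (Or.inr (measure_lt_top μ _))
      have hψint : Integrable ψ μ := (integrable_const (-c)).add (hindint.const_mul (2*c))
      have hψle : ∀ x, ψ x ≤ |f x - c| - |f x| := by
        intro x
        rcases le_or_gt 0 (f x) with h | h
        · have hind : Set.indicator {x | f x < 0} (fun _ => (1:ℝ)) x = 0 :=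
            Set.indicator_of_notMem (by simp [not_lt.mpr h]) _
          rw [hψ]; simp only [hind, mul_zero, add_zero]
          rw [abs_of_nonneg h, abs_of_nonneg (by linarith)]
          linarith
        · have hind : Set.indicator {x | f x < 0} (fun _ => (1:ℝ)) x = 1 :=
            Set.indicator_of_mem (by simpa using h) _
          rw [hψ]; simp only [hind, mul_one]
          have h1 := abs_sub_abs_le_abs_sub (f x) c
          have habs : |c| = -c := abs_of_nonpos hc
          linarith
      have hψint_eq : ∫ x, ψ x ∂μ = -c + (2*c) * (μ {x | f x < 0}).toReal := by
        rw [hψ, integral_add (integrable_const (-c)) (hindint.const_mul (2*c)),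
          integral_const, integral_const_mul, integral_indicator hms_neg]
        simp [measure_univ, measureReal_def]
      have hμlt : (μ {x | f x < 0}).toReal ≤ 1/2 := by
        have hcompl : {x : ℝ | f x < 0} = {x : ℝ | 0 ≤ f x}ᶜ := by
          ext x; simp [not_le]
        have h1 : μ {x | f x < 0} ≤ 1/2 := by
          rw [hcompl, measure_compl hms_ge (measure_ne_top μ _)]
          rw [measure_univ]
          refine tsub_le_iff_right.mpr ?_
          calc (1:ENNReal) = 1/2 + 1/2 := by rw [ENNReal.add_halves]
          _ ≤ 1/2 + μ {x | 0 ≤ f x} := by exact add_le_add_right hmed₁ _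
        calc (μ {x | f x < 0}).toReal ≤ ((1:ENNReal)/2).toReal :=
          ENNReal.toReal_mono (by norm_num) h1
        _ = 1/2 := by norm_num
      calc (0:ℝ) ≤ -c + (2*c) * (1/2) := by linarith
      _ ≤ -c + (2*c) * (μ {x | f x < 0}).toReal := by nlinarith [ENNReal.toReal_nonneg (a := μ {x | f x < 0})]
      _ = ∫ x, ψ x ∂μ := hψint_eq.symm
      _ ≤ ∫ x, (|f x - c| - |f x|) ∂μ := integral_mono hψint hint_g hψle
  have := integral_sub hint_fc hint_f
  linarith [key, this ▸ key]

/-- Maz'ya–Federer–Fleming, median form, on ℝ: if an absolutely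
continuous probability measure `μ` on ℝ satisfies Cheeger's isoperimetric inequality
`μ⁺(A) ≥ D·min(μ(A), 1−μ(A))`, then every locally Lipschitz `f` with median `0`
satisfies `D·∫|f| dμ ≤ ∫|f'| dμ`. -/
theorem cheeger_implies_L1_poincare (μ : Measure ℝ) [IsProbabilityMeasure μ]
    (habs : μ ≪ MeasureTheory.volume) (D : ℝ) (hD : 0 < D)
    (hche : ∀ A : Set ℝ, MeasurableSet A →
      ENNReal.ofReal (D * min (μ A).toReal (1 - (μ A).toReal)) ≤ boundaryMeasure μ A)
    (f : ℝ → ℝ) (hf : LocallyLipschitz f)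
    (hmed₁ : (1 / 2 : ENNReal) ≤ μ {x | 0 ≤ f x})
    (hmed₂ : (1 / 2 : ENNReal) ≤ μ {x | f x ≤ 0})
    (hintf : Integrable f μ) (hintf' : Integrable (fun x => |deriv f x|) μ) :
    D * ∫ x, |f x| ∂μ ≤ ∫ x, |deriv f x| ∂μ := by
  haveI : NullSingletonClass μ := ⟨fun x => habs Real.volume_singleton⟩
  obtain ⟨p, hp⟩ := exists_median μ
  set c := f p with hc
  have hfc : Continuous f := hf.continuous
  have hfm : Measurable f := hfc.measurable
  set F : ℝ → ℝ := fun t => (μ (Set.Iic t)).toReal with hF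
  have hIioIic : ∀ y : ℝ, μ (Set.Iio y) = μ (Set.Iic y) := by
    intro y
    rw [← Set.Iio_union_right, measure_union (by simp) (measurableSet_singleton y),
      measure_singleton, add_zero]
  -- step 1: median comparison
  have step1 : ∫ x, |f x| ∂μ ≤ ∫ x, |f x - c| ∂μ :=
    integral_abs_le_integral_abs_sub_median hfm hintf hmed₁ hmed₂ c
  -- pointwise FTC bound
  have hptw : ∀ y, |f y - c| ≤ ∫ t in Set.Ioc (min p y) (max p y), |deriv f t| := by
    intro y
    rcases le_total p y with h | h
    · rw [min_eq_left h, max_eq_right h]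
      exact locallyLipschitz_abs_sub_le_integral hf h
    · rw [min_eq_right h, max_eq_left h, abs_sub_comm]
      exact locallyLipschitz_abs_sub_le_integral hf h
  -- ENNReal quantities
  set q : ℝ → ENNReal := fun t => ENNReal.ofReal |deriv f t| with hq
  have hqmeas : Measurable q := ENNReal.measurable_ofReal.comp (measurable_deriv f).abs
  set W : ℝ → ENNReal := fun y => ∫⁻ t in Set.Ioc (min p y) (max p y), q t ∂volume with hW
  have hWptw : ∀ y, ENNReal.ofReal |f y - c| ≤ W y := by
    intro y
    refine le_trans (ENNReal.ofReal_le_ofReal (hptw y)) ?_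
    rw [ofReal_integral_eq_lintegral_ofReal (locallyLipschitz_integrableOn_abs_deriv hf)
      (ae_of_all _ fun t => abs_nonneg _)]
  -- Tonelli
  set S : Set (ℝ × ℝ) := {z : ℝ × ℝ | min p z.1 < z.2 ∧ z.2 ≤ max p z.1} with hS
  have hSmeas : MeasurableSet S := by
    refine MeasurableSet.inter ?_ ?_
    · exact measurableSet_lt ((measurable_const.min measurable_fst)) measurable_snd
    · exact measurableSet_le measurable_snd ((measurable_const.max measurable_fst))
  set w : ℝ → ENNReal := fun t => μ {y | min p y < t ∧ t ≤ max p y} with hw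
  have hsecmeas : ∀ t : ℝ, MeasurableSet {y | min p y < t ∧ t ≤ max p y} := by
    intro t
    exact MeasurableSet.preimage hSmeas (measurable_id.prodMk measurable_const)
  have hswap : ∫⁻ y, W y ∂μ = ∫⁻ t, q t * w t ∂volume := by
    have hWy : ∀ y, W y = ∫⁻ t, q t * S.indicator (fun _ => (1:ENNReal)) (y, t) ∂volume := by
      intro y
      rw [hW]
      simp only
      rw [← lintegral_indicator measurableSet_Ioc]
      refine lintegral_congr fun t => ?_
      by_cases ht : t ∈ Set.Ioc (min p y) (max p y)
      · rw [Set.indicator_of_mem ht, Set.indicator_of_mem (by exact ht), mul_one]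
      · rw [Set.indicator_of_notMem ht, Set.indicator_of_notMem (by exact ht), mul_zero]
    have hmeas_unc : AEMeasurable (fun z : ℝ × ℝ =>
        q z.2 * S.indicator (fun _ => (1:ENNReal)) z) (μ.prod volume) := by
      refine Measurable.aemeasurable ?_
      exact (hqmeas.comp measurable_snd).mul (measurable_one.indicator hSmeas)
    calc ∫⁻ y, W y ∂μ
        = ∫⁻ y, ∫⁻ t, q t * S.indicator (fun _ => (1:ENNReal)) (y, t) ∂volume ∂μ := by
          exact lintegral_congr fun y => hWy y
    _ = ∫⁻ t, ∫⁻ y, q t * S.indicator (fun _ => (1:ENNReal)) (y, t) ∂μ ∂volume :=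
          lintegral_lintegral_swap hmeas_unc
    _ = ∫⁻ t, q t * w t ∂volume := by
          refine lintegral_congr fun t => ?_
          have hind : ∀ y : ℝ, S.indicator (fun _ => (1:ENNReal)) (y, t)
              = Set.indicator {y | min p y < t ∧ t ≤ max p y} (fun _ => (1:ENNReal)) y := by
            intro y
            by_cases hy : (y, t) ∈ S
            · rw [Set.indicator_of_mem hy, Set.indicator_of_mem (by exact hy)]
            · rw [Set.indicator_of_notMem hy, Set.indicator_of_notMem (by exact hy)]
          calc ∫⁻ y, q t * S.indicator (fun _ => (1:ENNReal)) (y, t) ∂μ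
              = ∫⁻ y, q t * Set.indicator {y | min p y < t ∧ t ≤ max p y}
                  (fun _ => (1:ENNReal)) y ∂μ := lintegral_congr fun y => by rw [hind y]
          _ = q t * ∫⁻ y, Set.indicator {y | min p y < t ∧ t ≤ max p y}
                  (fun _ => (1:ENNReal)) y ∂μ :=
                lintegral_const_mul _ (measurable_one.indicator (hsecmeas t))
          _ = q t * w t := by rw [lintegral_indicator (hsecmeas t)]; simp [hw]
  -- weight identification
  have hFp : F p = 1/2 := hp
  have hwle : ∀ t : ℝ, w t = ENNReal.ofReal (min (F t) (1 - F t)) := by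
    intro t
    rcases le_or_gt t p with htp | hpt
    · have hsec : {y | min p y < t ∧ t ≤ max p y} = Set.Iio t := by
        ext y
        simp only [Set.mem_setOf_eq, Set.mem_Iio]
        constructor
        · rintro ⟨h1, _⟩
          rcases le_total p y with hpy | hpy
          · rw [min_eq_left hpy] at h1; linarith
          · rwa [min_eq_right hpy] at h1
        · intro hyt
          exact ⟨lt_of_le_of_lt (min_le_right _ _) hyt,
            le_trans htp (le_max_left _ _)⟩
      have hFt : F t ≤ 1/2 := by
        rw [← hFp]
        exact ENNReal.toReal_mono (measure_ne_top μ _) (measure_mono (Set.Iic_subset_Iic.mpr htp))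
      rw [hw]; simp only
      rw [hsec, hIioIic, min_eq_left (by linarith : F t ≤ 1 - F t)]
      exact (ENNReal.ofReal_toReal (measure_ne_top μ _)).symm
    · have hsec : {y | min p y < t ∧ t ≤ max p y} = Set.Ici t := by
        ext y
        simp only [Set.mem_setOf_eq, Set.mem_Ici]
        constructor
        · rintro ⟨_, h2⟩
          rcases le_total p y with hpy | hpy
          · rwa [max_eq_right hpy] at h2
          · rw [max_eq_left hpy] at h2; linarith
        · intro hty
          exact ⟨lt_of_le_of_lt (min_le_left _ _) hpt,
            le_trans hty (le_max_right _ _)⟩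
      have hFt : 1/2 ≤ F t := by
        rw [← hFp]
        exact ENNReal.toReal_mono (measure_ne_top μ _)
          (measure_mono (Set.Iic_subset_Iic.mpr hpt.le))
      have hci : μ (Set.Ici t) = ENNReal.ofReal (1 - F t) := by
        have hcompl : Set.Ici t = (Set.Iio t)ᶜ := by simp
        have h1 : (μ (Set.Ici t)).toReal = 1 - F t := by
          rw [hcompl, measure_compl measurableSet_Iio (measure_ne_top μ _), measure_univ]
          rw [ENNReal.toReal_sub_of_le (by exact measure_mono (Set.subset_univ _) |>.trans_eq measure_univ) (by simp), hIioIic]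
          simp [hF]
        rw [← h1]
        exact (ENNReal.ofReal_toReal (measure_ne_top μ _)).symm
      rw [hw]; simp only
      rw [hsec, hci, min_eq_right (by linarith : 1 - F t ≤ F t)]
  -- density bound
  set ρ : ℝ → ENNReal := μ.rnDeriv volume with hρ
  have hdens := cheeger_density_bound μ habs hche
  have hae : ∀ᵐ t ∂volume, ENNReal.ofReal D * (q t * w t) ≤ ρ t * q t := by
    filter_upwards [hdens, Measure.rnDeriv_lt_top μ volume] with t ht hlt
    calc ENNReal.ofReal D * (q t * w t) = q t * (ENNReal.ofReal D * w t) := by ring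
    _ = q t * ENNReal.ofReal (D * min (F t) (1 - F t)) := by
          rw [hwle t, ← ENNReal.ofReal_mul hD.le]
    _ ≤ q t * ENNReal.ofReal ((ρ t).toReal) := by
          refine mul_le_mul_right (ENNReal.ofReal_le_ofReal ?_) _
          exact ht
    _ = q t * ρ t := by rw [ENNReal.ofReal_toReal hlt.ne]
    _ = ρ t * q t := mul_comm _ _
  -- pull everything together in ENNReal
  have hwd : volume.withDensity ρ = μ := Measure.withDensity_rnDeriv_eq μ volume habs
  have hqdμ : ∫⁻ t, ρ t * q t ∂volume = ∫⁻ t, q t ∂μ := by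
    rw [← hwd]
    rw [lintegral_withDensity_eq_lintegral_mul volume (Measure.measurable_rnDeriv μ volume) hqmeas]
    rfl
  have hqint : ∫⁻ t, q t ∂μ = ENNReal.ofReal (∫ t, |deriv f t| ∂μ) :=
    (ofReal_integral_eq_lintegral_ofReal hintf' (ae_of_all _ fun t => abs_nonneg _)).symm
  have hchain : ENNReal.ofReal D * ∫⁻ y, ENNReal.ofReal |f y - c| ∂μ
      ≤ ENNReal.ofReal (∫ t, |deriv f t| ∂μ) := by
    calc ENNReal.ofReal D * ∫⁻ y, ENNReal.ofReal |f y - c| ∂μ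
        ≤ ENNReal.ofReal D * ∫⁻ y, W y ∂μ := by
          exact mul_le_mul_right (lintegral_mono fun y => hWptw y) _
    _ = ENNReal.ofReal D * ∫⁻ t, q t * w t ∂volume := by rw [hswap]
    _ = ∫⁻ t, ENNReal.ofReal D * (q t * w t) ∂volume := by
          rw [lintegral_const_mul]
          exact hqmeas.mul (by
            have : Measurable w := by
              -- w is measurable since it equals an explicit ofReal composition
              have : w = fun t => ENNReal.ofReal (min (F t) (1 - F t)) := funext hwle
              rw [this]
              refine ENNReal.measurable_ofReal.comp ?_
              refine Measurable.min ?_ ?_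
              · -- F measurable (monotone)
                exact (Monotone.measurable fun a b hab =>
                  ENNReal.toReal_mono (measure_ne_top μ _)
                    (measure_mono (Set.Iic_subset_Iic.mpr hab)))
              · exact (measurable_const.sub (Monotone.measurable fun a b hab =>
                  ENNReal.toReal_mono (measure_ne_top μ _)
                    (measure_mono (Set.Iic_subset_Iic.mpr hab))))
            exact this)
    _ ≤ ∫⁻ t, ρ t * q t ∂volume := lintegral_mono_ae hae
    _ = ∫⁻ t, q t ∂μ := hqdμ
    _ = ENNReal.ofReal (∫ t, |deriv f t| ∂μ) := hqint
  -- back to real numbers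
  have hint_fc : Integrable (fun x => |f x - c|) μ := (hintf.sub (integrable_const c)).abs
  have hofReal : ENNReal.ofReal (D * ∫ x, |f x - c| ∂μ)
      = ENNReal.ofReal D * ∫⁻ y, ENNReal.ofReal |f y - c| ∂μ := by
    rw [ENNReal.ofReal_mul hD.le,
      ofReal_integral_eq_lintegral_ofReal hint_fc (ae_of_all _ fun x => abs_nonneg _)]
  have hfinal : D * ∫ x, |f x - c| ∂μ ≤ ∫ t, |deriv f t| ∂μ := by
    have h1 : ENNReal.ofReal (D * ∫ x, |f x - c| ∂μ) ≤ ENNReal.ofReal (∫ t, |deriv f t| ∂μ) := by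
      rw [hofReal]; exact hchain
    have h2 := ENNReal.toReal_mono (by exact ENNReal.ofReal_ne_top) h1
    rw [ENNReal.toReal_ofReal (by positivity : (0:ℝ) ≤ D * ∫ x, |f x - c| ∂μ)] at h2
    · rw [ENNReal.toReal_ofReal (integral_nonneg fun t => abs_nonneg _)] at h2
      exact h2
  calc D * ∫ x, |f x| ∂μ ≤ D * ∫ x, |f x - c| ∂μ := by
        exact mul_le_mul_of_nonneg_left step1 hD.le
  _ ≤ ∫ t, |deriv f t| ∂μ := hfinal
end

section
/- Lower semi-continuity under approximation from above: let (Ω, d) be a metric space and μ_m, μ Borel probability measures such that μ_m → μ in total variation and there exist constants c_m → 1 with μ_m(A) ≥ μ(A)/c_m for all Borel A. Then for every t ∈ (0,1), liminf_{m→∞} I_{μ_m}(t) ≥ liminf_{s→t} I_μ(s), where I_ν denotes the isoperimetric profile of (Ω, d, ν). -/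
open MeasureTheory Filter

lemma meas_thick_diff {Ω : Type*} [MetricSpace Ω] [MeasurableSpace Ω] [BorelSpace Ω]
    (μ : Measure Ω) [IsProbabilityMeasure μ] {A : Set Ω} (hA : MeasurableSet A)
    {ε : ℝ} (hε : 0 < ε) :
    (μ (Metric.thickening ε A)).toReal - (μ A).toReal
      = (μ (Metric.thickening ε A \ A)).toReal := by
  have hsub : A ⊆ Metric.thickening ε A := Metric.self_subset_thickening hε A
  have h1 : μ (Metric.thickening ε A) = μ A + μ (Metric.thickening ε A \ A) := by
    rw [← measure_union Set.disjoint_sdiff_right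
        (Metric.isOpen_thickening.measurableSet.diff hA), Set.union_diff_cancel hsub]
  rw [h1, ENNReal.toReal_add (measure_ne_top μ _) (measure_ne_top μ _)]
  ring

lemma boundary_compare {Ω : Type*} [MetricSpace Ω] [MeasurableSpace Ω] [BorelSpace Ω]
    (μ ν : Measure Ω) [IsProbabilityMeasure μ] [IsProbabilityMeasure ν]
    {A : Set Ω} (hA : MeasurableSet A) {c : ℝ} (hc : 0 < c)
    (h : ∀ B : Set Ω, MeasurableSet B → μ B / ENNReal.ofReal c ≤ ν B) :
    boundaryMeasure μ A ≤ ENNReal.ofReal c * boundaryMeasure ν A := by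
  have hc0 : (ENNReal.ofReal c) ≠ 0 := by simp [hc]
  have hctop : (ENNReal.ofReal c) ≠ ⊤ := ENNReal.ofReal_ne_top
  have hmono : Monotone (fun x : ENNReal => ENNReal.ofReal c * x) :=
    fun x y hxy => mul_le_mul_right hxy _
  have hcont : ContinuousAt (fun x : ENNReal => ENNReal.ofReal c * x)
      (liminf (fun ε : ℝ =>
        ENNReal.ofReal (((ν (Metric.thickening ε A)).toReal - (ν A).toReal) / ε))
        (nhdsWithin 0 (Set.Ioi 0))) :=
    (ENNReal.continuous_const_mul hctop).continuousAt
  have heq := hmono.map_liminf_of_continuousAt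
    (fun ε : ℝ => ENNReal.ofReal (((ν (Metric.thickening ε A)).toReal - (ν A).toReal) / ε))
    hcont
  unfold boundaryMeasure
  rw [heq]
  refine Filter.liminf_le_liminf ?_
  filter_upwards [self_mem_nhdsWithin] with ε (hε : 0 < ε)
  have hD : MeasurableSet (Metric.thickening ε A \ A) :=
    Metric.isOpen_thickening.measurableSet.diff hA
  have key : (μ (Metric.thickening ε A \ A)).toReal
      ≤ c * (ν (Metric.thickening ε A \ A)).toReal := by
    have h1 : μ (Metric.thickening ε A \ A)
        ≤ ENNReal.ofReal c * ν (Metric.thickening ε A \ A) := by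
      have := h _ hD
      rwa [ENNReal.div_le_iff hc0 hctop, mul_comm] at this
    calc (μ (Metric.thickening ε A \ A)).toReal
        ≤ (ENNReal.ofReal c * ν (Metric.thickening ε A \ A)).toReal :=
          ENNReal.toReal_mono (ENNReal.mul_ne_top hctop (measure_ne_top ν _)) h1
      _ = c * (ν (Metric.thickening ε A \ A)).toReal := by
          rw [ENNReal.toReal_mul, ENNReal.toReal_ofReal hc.le]
  simp only [Function.comp]
  rw [meas_thick_diff μ hA hε, meas_thick_diff ν hA hε,
    ← ENNReal.ofReal_mul hc.le]
  apply ENNReal.ofReal_le_ofReal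
  rw [← mul_div_assoc]
  gcongr

/-- lower semi-continuity of the profile under approximation from above:
if `μ_m → μ` in total variation and `μ_m(A) ≥ μ(A)/c_m` for all Borel `A` with `c_m → 1`,
then `liminf_m I_{μ_m}(t) ≥ liminf_{s→t} I_μ(s)` for every `t ∈ (0,1)`. -/
theorem profile_lsc_approx_from_above {Ω : Type*} [MetricSpace Ω] [MeasurableSpace Ω]
    [BorelSpace Ω]
    (μ : Measure Ω) [IsProbabilityMeasure μ]
    (μs : ℕ → Measure Ω) (hprob : ∀ m, IsProbabilityMeasure (μs m))
    (htv : ∀ ε > (0 : ℝ), ∀ᶠ m in atTop, ∀ B : Set Ω, MeasurableSet B →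
      |((μs m) B).toReal - (μ B).toReal| ≤ ε)
    (c : ℕ → ℝ) (hc : Tendsto c atTop (nhds 1)) (hcpos : ∀ m, 0 < c m)
    (habove : ∀ m, ∀ A : Set Ω, MeasurableSet A →
      μ A / ENNReal.ofReal (c m) ≤ (μs m) A)
    (t : ℝ) (ht : t ∈ Set.Ioo (0 : ℝ) 1) :
    liminf (fun s => isoProfile μ s) (nhds t)
      ≤ liminf (fun m => isoProfile (μs m) t) atTop := by
  rw [le_liminf_iff]
  intro b hb
  obtain ⟨b₁, hbb₁, hb₁⟩ := exists_between hb
  obtain ⟨b₂, hb₁b₂, hb₂⟩ := exists_between hb₁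
  have hev : ∀ᶠ s in nhds t, b₂ < isoProfile μ s := eventually_lt_of_lt_liminf hb₂
  rw [Metric.eventually_nhds_iff] at hev
  obtain ⟨δ, hδ, hδ'⟩ := hev
  have h1 := htv (δ / 2) (by positivity)
  have h2 : ∀ᶠ m in atTop, b₁ * ENNReal.ofReal (c m) < b₂ := by
    have htend : Tendsto (fun m => b₁ * ENNReal.ofReal (c m)) atTop (nhds (b₁ * 1)) :=
      ENNReal.Tendsto.const_mul (by simpa using ENNReal.tendsto_ofReal hc)
        (Or.inl one_ne_zero)
    rw [mul_one] at htend
    exact htend.eventually_lt_const hb₁b₂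
  filter_upwards [h1, h2] with m hm1 hm2
  refine lt_of_lt_of_le hbb₁ ?_
  haveI := hprob m
  refine le_iInf fun A => le_iInf fun hA => le_iInf fun hAt => ?_
  have hs : dist ((μ A).toReal) t < δ := by
    rw [Real.dist_eq]
    have h3 := hm1 A hA
    rw [hAt] at h3
    calc |(μ A).toReal - t| = |t - (μ A).toReal| := abs_sub_comm _ _
      _ ≤ δ / 2 := h3
      _ < δ := by linarith
  have hprof : b₂ < isoProfile μ ((μ A).toReal) := hδ' hs
  have hBd : isoProfile μ ((μ A).toReal) ≤ boundaryMeasure μ A :=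
    iInf_le_of_le A (iInf_le_of_le hA (iInf_le _ rfl))
  have hkey := boundary_compare μ (μs m) hA (hcpos m) (fun B hB => habove m B hB)
  have hfin : b₁ * ENNReal.ofReal (c m)
      ≤ ENNReal.ofReal (c m) * boundaryMeasure (μs m) A :=
    hm2.le.trans (hprof.le.trans (hBd.trans hkey))
  rw [mul_comm b₁] at hfin
  exact (ENNReal.mul_le_mul_iff_right (by simp [hcpos m]) ENNReal.ofReal_ne_top).mp hfin
end

section
/- Lower semi-continuity under approximation from within: let (Ω, d) be a metric space, μ a Borel probability measure, and A_m Borel sets with μ(A_m) → 1 and μ⁺(A_m) → 0. Set μ_m = μ|_{A_m}/μ(A_m). Then for every t ∈ (0,1), liminf_{m→∞} I_{μ_m}(t) ≥ liminf_{s→t} I_μ(s). -/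
open MeasureTheory Filter

private lemma liminf_add_le_of_tendsto' {α : Type*} {l : Filter α} [l.NeBot]
    {p q : α → ENNReal} {P : ENNReal} (hP : P ≠ ⊤) (hp : Tendsto p l (nhds P)) :
    liminf (fun x => p x + q x) l ≤ P + liminf q l := by
  refine ENNReal.le_of_forall_pos_le_add fun δ hδ _ => ?_
  have hPδ : P < P + (δ / 2 : NNReal) :=
    ENNReal.lt_add_right hP (ENNReal.coe_ne_zero.mpr (half_pos hδ).ne')
  have hev : ∀ᶠ x in l, p x < P + (δ / 2 : NNReal) := hp.eventually_lt_const hPδ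
  have h1 : liminf (fun x => p x + q x) l ≤ liminf (fun x => (P + (δ / 2 : NNReal)) + q x) l :=
    liminf_le_liminf (hev.mono fun x hx => add_le_add hx.le le_rfl)
  have h2 : liminf (fun x => (P + (δ / 2 : NNReal)) + q x) l
      = (P + (δ / 2 : NNReal)) + liminf q l :=
    liminf_const_add l q _ (by isBoundedDefault) (by isBoundedDefault)
  calc liminf (fun x => p x + q x) l ≤ (P + (δ / 2 : NNReal)) + liminf q l := h1.trans_eq h2
    _ ≤ (P + liminf q l) + δ := by
        rw [add_right_comm]
        exact add_le_add le_rfl (ENNReal.coe_le_coe.mpr (half_le_self zero_le))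

set_option maxHeartbeats 2000000 in
/-- lower semi-continuity of the profile under approximation from within:
if `μ(A_m) → 1`, `μ⁺(A_m) → 0` and `μ_m = μ|_{A_m}/μ(A_m)`, then
`liminf_m I_{μ_m}(t) ≥ liminf_{s→t} I_μ(s)` for every `t ∈ (0,1)`. -/
theorem profile_lsc_approx_from_within {Ω : Type*} [MetricSpace Ω] [MeasurableSpace Ω]
    [BorelSpace Ω]
    (μ : Measure Ω) [IsProbabilityMeasure μ]
    (A : ℕ → Set Ω) (hA : ∀ m, MeasurableSet (A m))
    (hA1 : Tendsto (fun m => μ (A m)) atTop (nhds 1))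
    (hA2 : Tendsto (fun m => boundaryMeasure μ (A m)) atTop (nhds 0))
    (t : ℝ) (ht : t ∈ Set.Ioo (0 : ℝ) 1) :
    liminf (fun s => isoProfile μ s) (nhds t)
      ≤ liminf (fun m => isoProfile ((μ (A m))⁻¹ • μ.restrict (A m)) t) atTop := by
  by_contra hcon
  rw [not_le] at hcon
  obtain ⟨b, hLb, hb'⟩ := exists_between hcon
  obtain ⟨b₁, hbb₁, hb₁'⟩ := exists_between hb'
  have hbne : b ≠ ⊤ := (hbb₁.trans_le le_top).ne
  have hb₁ne : b₁ ≠ ⊤ := (hb₁'.trans_le le_top).ne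
  have hb0 : 0 < b := lt_of_le_of_lt zero_le hLb
  obtain ⟨β, hβ⟩ : ∃ β : ℝ, β = b.toReal := ⟨_, rfl⟩
  have hβ0 : 0 < β := hβ ▸ ENNReal.toReal_pos hb0.ne' hbne
  have hββ₁ : β < b₁.toReal := hβ ▸ ENNReal.toReal_strict_mono hb₁ne hbb₁
  obtain ⟨τ, hτ⟩ : ∃ τ : ℝ, τ = (b₁.toReal - β) / 3 := ⟨_, rfl⟩
  have hτ0 : 0 < τ := hτ ▸ div_pos (by linarith) (by norm_num)
  -- eventual lower bound on the profile near t
  have heventF : ∀ᶠ s in nhds t, b₁ < isoProfile μ s := eventually_lt_of_lt_liminf hb₁'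
  obtain ⟨w, hw0, hballF⟩ := Metric.eventually_nhds_iff.mp heventF
  obtain ⟨w₂, hw₂⟩ : ∃ w₂ : ℝ, w₂ = min (w / 2) (1 / 2) := ⟨_, rfl⟩
  have hw₂0 : 0 < w₂ := hw₂ ▸ lt_min (by linarith) (by norm_num)
  have hw₂half : w₂ ≤ 1 / 2 := hw₂ ▸ min_le_right _ _
  have hw₂w : w₂ ≤ w / 2 := hw₂ ▸ min_le_left _ _
  -- choose a good index m
  have hfreq : ∃ᶠ m in atTop, isoProfile ((μ (A m))⁻¹ • μ.restrict (A m)) t < b :=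
    frequently_lt_of_liminf_lt (by isBoundedDefault) hLb
  have hev1 : ∀ᶠ m in atTop, boundaryMeasure μ (A m) < ENNReal.ofReal τ :=
    hA2.eventually_lt_const (ENNReal.ofReal_pos.mpr hτ0)
  have hev2 : ∀ᶠ m in atTop, ENNReal.ofReal (1 - w₂) < μ (A m) :=
    hA1.eventually_const_lt (by
      rw [← ENNReal.ofReal_one]
      exact ENNReal.ofReal_lt_ofReal_iff (by norm_num) |>.mpr (by linarith))
  obtain ⟨m, hm, hm1, hm2⟩ := (hfreq.and_eventually (hev1.and hev2)).exists
  obtain ⟨c, hc⟩ : ∃ c : ℝ, c = (μ (A m)).toReal := ⟨_, rfl⟩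
  have hμAne : μ (A m) ≠ ⊤ := measure_ne_top μ _
  have hc1 : c ≤ 1 := by
    have h1 : (μ (A m)).toReal ≤ (1 : ENNReal).toReal :=
      ENNReal.toReal_mono ENNReal.one_ne_top prob_le_one
    rw [hc]; simpa using h1
  have hcw : 1 - w₂ < c := by
    have h1 := ENNReal.toReal_strict_mono hμAne hm2
    rw [ENNReal.toReal_ofReal (by linarith)] at h1
    rw [hc]; exact h1
  have hc0 : 0 < c := by linarith
  -- extract a near-optimal set B for μ_m
  simp only [isoProfile, iInf_lt_iff] at hm
  obtain ⟨B, hBmeas, hBt, hBlt⟩ := hm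
  have hrest : ∀ S : Set Ω, MeasurableSet S →
      ((((μ (A m))⁻¹ • μ.restrict (A m))) S).toReal = c⁻¹ * (μ (S ∩ A m)).toReal := by
    intro S hS
    rw [Measure.smul_apply, smul_eq_mul, Measure.restrict_apply hS, ENNReal.toReal_mul,
      ENNReal.toReal_inv, ← hc]
  have hsB : (μ (B ∩ A m)).toReal = c * t := by
    have h1 : t = c⁻¹ * (μ (B ∩ A m)).toReal := by rw [← hBt, hrest B hBmeas]
    rw [h1]; field_simp
  obtain ⟨h, hh⟩ : ∃ h : ℝ → ℝ, h = fun x => (μ (Metric.thickening x B ∩ A m)).toReal := ⟨_, rfl⟩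
  have hMono : Monotone h := by
    rw [hh]
    exact fun x y hxy =>
      ENNReal.toReal_mono (measure_ne_top _ _)
        (measure_mono (Set.inter_subset_inter_left _ (Metric.thickening_mono hxy B)))
  have hhlb : ∀ ⦃ε : ℝ⦄, 0 < ε → c * t ≤ h ε := by
    intro ε hε
    rw [← hsB, hh]
    exact ENNReal.toReal_mono (measure_ne_top _ _)
      (measure_mono (Set.inter_subset_inter_left _ (Metric.self_subset_thickening hε B)))
  -- Claim A : the liminf of the (unnormalized, intersected) growth quotients is < b
  have claimA : liminf (fun ε => ENNReal.ofReal ((h ε - c * t) / ε))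
      (nhdsWithin 0 (Set.Ioi 0)) < b := by
    refine lt_of_le_of_lt ?_ hBlt
    rw [boundaryMeasure]
    refine liminf_le_liminf ?_
    filter_upwards [eventually_mem_nhdsWithin] with ε hε
    have hε0 : (0 : ℝ) < ε := hε
    rw [hrest _ Metric.isOpen_thickening.measurableSet, hBt]
    apply ENNReal.ofReal_le_ofReal
    have hinv1 : (1 : ℝ) ≤ c⁻¹ := (one_le_inv₀ hc0).mpr hc1
    have hnum : h ε - c * t ≤ c⁻¹ * (μ (Metric.thickening ε B ∩ A m)).toReal - t := by
      have heq : c⁻¹ * (μ (Metric.thickening ε B ∩ A m)).toReal - t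
          = c⁻¹ * (h ε - c * t) := by
        rw [hh]; field_simp
      rw [heq]
      nlinarith [hhlb hε0]
    exact (div_le_div_iff_of_pos_right hε0).mpr hnum
  -- choose a good scale ε'
  obtain ⟨r, hr⟩ : ∃ r : ℝ, r = min 1 (w / (2 * (β + 1))) := ⟨_, rfl⟩
  have hr0 : 0 < r := hr ▸ lt_min one_pos (by positivity)
  have hevr : ∀ᶠ ε in nhdsWithin 0 (Set.Ioi 0), ε ∈ Set.Ioo (0 : ℝ) r :=
    eventually_of_mem (Ioo_mem_nhdsGT_of_mem ⟨le_rfl, hr0⟩) fun _ hx => hx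
  obtain ⟨ε', hε'lt, hε'0, hε'r⟩ :=
    ((frequently_lt_of_liminf_lt (by isBoundedDefault) claimA).and_eventually hevr).exists
  have hquot0 : 0 ≤ (h ε' - c * t) / ε' := div_nonneg (by linarith [hhlb hε'0]) hε'0.le
  have hstar : h ε' - c * t < β * ε' := by
    have h1 := (ENNReal.ofReal_lt_iff_lt_toReal hquot0 hbne).mp hε'lt
    rw [div_lt_iff₀ hε'0] at h1
    rw [hβ]; linarith [h1]
  -- find a point with small derivative via the Stieltjes measure of h
  obtain ⟨σ, hσ⟩ : ∃ σ : ℝ, σ = τ / (3 * (β + τ)) := ⟨_, rfl⟩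
  have hβτ : 0 < β + τ := by linarith
  have hσ0 : 0 < σ := by rw [hσ]; positivity
  have hσval : σ * (β + τ) = τ / 3 := by rw [hσ]; field_simp
  have hσ3 : σ < 1 / 3 := by
    rw [hσ, div_lt_iff₀ (by linarith)]
    nlinarith
  obtain ⟨x, hx⟩ : ∃ x : ℝ, x = σ * ε' := ⟨_, rfl⟩
  obtain ⟨y, hy⟩ : ∃ y : ℝ, y = (1 - σ) * ε' := ⟨_, rfl⟩
  have hx0 : 0 < x := hx ▸ mul_pos hσ0 hε'0
  have hxy : x < y := by rw [hx, hy]; nlinarith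
  have hyε : y < ε' := by rw [hy]; nlinarith
  obtain ⟨lam, hlam⟩ : ∃ lam : ℝ, lam = β + τ := ⟨_, rfl⟩
  have hlam0 : 0 ≤ lam := by rw [hlam]; positivity
  let ν := hMono.stieltjesFunction.measure
  have claimB : ∃ z ∈ Set.Ioc x y,
      HasDerivAt h ((ν.rnDeriv volume z).toReal) z
        ∧ ν.rnDeriv volume z ≤ ENNReal.ofReal lam := by
    by_contra hno
    push_neg at hno
    have hae : ∀ᵐ z ∂(volume.restrict (Set.Ioc x y)),
        ENNReal.ofReal lam ≤ ν.rnDeriv volume z := by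
      rw [ae_restrict_iff' measurableSet_Ioc]
      filter_upwards [hMono.ae_hasDerivAt] with z hz hzmem
      exact (hno z hzmem hz).le
    have h1 : ENNReal.ofReal lam * volume (Set.Ioc x y) ≤ ν (Set.Ioc x y) := by
      calc ENNReal.ofReal lam * volume (Set.Ioc x y)
          = ∫⁻ _ in Set.Ioc x y, ENNReal.ofReal lam := (setLIntegral_const _ _).symm
        _ ≤ ∫⁻ z in Set.Ioc x y, ν.rnDeriv volume z := lintegral_mono_ae hae
        _ ≤ ν (Set.Ioc x y) := Measure.setLIntegral_rnDeriv_le _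
    rw [Real.volume_Ioc, show ν = hMono.stieltjesFunction.measure from rfl,
      StieltjesFunction.measure_Ioc,
      ← ENNReal.ofReal_mul hlam0] at h1
    have h2 : hMono.stieltjesFunction y - hMono.stieltjesFunction x ≤ h ε' - c * t := by
      have hy' : hMono.stieltjesFunction y ≤ h ε' := by
        rw [hMono.stieltjesFunction_eq]
        exact hMono.rightLim_le hyε
      have hx' : c * t ≤ hMono.stieltjesFunction x := by
        rw [hMono.stieltjesFunction_eq]
        exact (hhlb hx0).trans (hMono.le_rightLim le_rfl)
      linarith
    have h3 : lam * (y - x) ≤ h ε' - c * t := by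
      have h4 := h1.trans (ENNReal.ofReal_le_ofReal h2)
      exact (ENNReal.ofReal_le_ofReal_iff (by linarith [hhlb hε'0])).mp h4
    have h5 : β * ε' < lam * (y - x) := by
      have hyx : y - x = (1 - 2 * σ) * ε' := by rw [hx, hy]; ring
      rw [hyx, hlam]
      nlinarith [hσval]
    linarith
  obtain ⟨z, ⟨hxz, hzy⟩, hzderiv, hzrn⟩ := claimB
  have hz0 : 0 < z := hx0.trans hxz
  have hzε : z < ε' := lt_of_le_of_lt hzy hyε
  obtain ⟨d, hd⟩ : ∃ d : ℝ, d = (ν.rnDeriv volume z).toReal := ⟨_, rfl⟩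
  have hdlam : d ≤ lam := by
    have h1 := ENNReal.toReal_mono ENNReal.ofReal_ne_top hzrn
    rw [ENNReal.toReal_ofReal hlam0] at h1
    rw [hd]; exact h1
  -- the competitor set for μ
  obtain ⟨C, hC⟩ : ∃ C : Set Ω, C = Metric.thickening z B ∩ A m := ⟨_, rfl⟩
  have hCmeas : MeasurableSet C := hC ▸ Metric.isOpen_thickening.measurableSet.inter (hA m)
  have hCval : (μ C).toReal = h z := by rw [hC, hh]
  have hhz1 : c * t ≤ h z := hhlb hz0
  have hhz2 : h z ≤ h ε' := hMono hzε.le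
  have hdist : dist (h z) t < w := by
    rw [Real.dist_eq, abs_lt]
    have hε'w : ε' < w / (2 * (β + 1)) := lt_of_lt_of_le hε'r (hr ▸ min_le_right _ _)
    have hβε : β * ε' < w / 2 := by
      rw [lt_div_iff₀ (by positivity)] at hε'w
      nlinarith
    constructor
    · nlinarith [ht.1, ht.2.le]
    · nlinarith [ht.1, ht.2.le]
  have hb₁lt : b₁ < isoProfile μ (h z) := hballF hdist
  have hiso : isoProfile μ (h z) ≤ boundaryMeasure μ C := by
    refine iInf_le_of_le C (iInf_le_of_le hCmeas ?_)
    exact iInf_le _ hCval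
  -- the slope of h at z converges
  have hslope : Tendsto (fun ε => (h (z + ε) - h z) / ε) (nhdsWithin 0 (Set.Ioi 0)) (nhds d) := by
    have h1 : Tendsto (fun ε : ℝ => z + ε) (nhdsWithin 0 (Set.Ioi 0))
        (nhdsWithin z {z}ᶜ) := by
      apply tendsto_nhdsWithin_of_tendsto_nhds_of_eventually_within
      · have h2 : Tendsto (fun ε : ℝ => z + ε) (nhds 0) (nhds (z + 0)) :=
          tendsto_const_nhds.add tendsto_id
        rw [add_zero] at h2
        exact h2.mono_left nhdsWithin_le_nhds
      · filter_upwards [eventually_mem_nhdsWithin] with ε hε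
        have hε0 : (0 : ℝ) < ε := hε
        simp only [Set.mem_compl_iff, Set.mem_singleton_iff]
        intro habs
        have h0 : ε = 0 := by linarith [habs]
        linarith
    rw [hd]
    have h2 := (hasDerivAt_iff_tendsto_slope.mp hzderiv).comp h1
    refine Tendsto.congr (fun ε => ?_) h2
    simp only [Function.comp_apply, slope_def_field]
    rw [add_sub_cancel_left]
  have hp : Tendsto (fun ε => ENNReal.ofReal ((h (z + ε) - h z) / ε))
      (nhdsWithin 0 (Set.Ioi 0)) (nhds (ENNReal.ofReal d)) :=
    (ENNReal.continuous_ofReal.tendsto d).comp hslope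
  -- pointwise bound on the growth quotient of C
  have hpoint : ∀ᶠ ε in nhdsWithin 0 (Set.Ioi 0),
      ENNReal.ofReal (((μ (Metric.thickening ε C)).toReal - (μ C).toReal) / ε)
        ≤ ENNReal.ofReal ((h (z + ε) - h z) / ε)
          + ENNReal.ofReal
            (((μ (Metric.thickening ε (A m))).toReal - (μ (A m)).toReal) / ε) := by
    filter_upwards [eventually_mem_nhdsWithin] with ε hε
    have hε0 : (0 : ℝ) < ε := hε
    have hsub : Metric.thickening ε C
        ⊆ (Metric.thickening (z + ε) B ∩ A m) ∪ (Metric.thickening ε (A m) \ A m) := by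
      rw [hC]
      intro u hu
      have hu1 : u ∈ Metric.thickening (z + ε) B := by
        have h2 : Metric.thickening ε (Metric.thickening z B ∩ A m)
            ⊆ Metric.thickening ε (Metric.thickening z B) :=
          Metric.thickening_subset_of_subset ε Set.inter_subset_left
        have h3 := Metric.thickening_thickening_subset ε z B (h2 hu)
        rwa [add_comm] at h3
      have hu2 : u ∈ Metric.thickening ε (A m) :=
        Metric.thickening_subset_of_subset ε Set.inter_subset_right hu
      by_cases hmem : u ∈ A m
      · exact Or.inl ⟨hu1, hmem⟩
      · exact Or.inr ⟨hu2, hmem⟩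
    have hmeas1 : (μ (Metric.thickening ε C)).toReal
        ≤ h (z + ε) + ((μ (Metric.thickening ε (A m))).toReal - (μ (A m)).toReal) := by
      have hd1 : μ (Metric.thickening ε (A m) \ A m)
          = μ (Metric.thickening ε (A m)) - μ (A m) :=
        measure_diff (Metric.self_subset_thickening hε0 _) (hA m).nullMeasurableSet
          (measure_ne_top μ _)
      have h1 : μ (Metric.thickening ε C)
          ≤ μ (Metric.thickening (z + ε) B ∩ A m) + μ (Metric.thickening ε (A m) \ A m) :=
        (measure_mono hsub).trans (measure_union_le _ _)
      have h2 := ENNReal.toReal_mono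
        (ENNReal.add_ne_top.mpr ⟨measure_ne_top _ _, measure_ne_top _ _⟩) h1
      rw [ENNReal.toReal_add (measure_ne_top _ _) (measure_ne_top _ _), hd1,
        ENNReal.toReal_sub_of_le (measure_mono (Metric.self_subset_thickening hε0 _))
          (measure_ne_top _ _)] at h2
      simpa [hh] using h2
    calc ENNReal.ofReal (((μ (Metric.thickening ε C)).toReal - (μ C).toReal) / ε)
        ≤ ENNReal.ofReal ((h (z + ε) - h z) / ε
            + ((μ (Metric.thickening ε (A m))).toReal - (μ (A m)).toReal) / ε) := by
          apply ENNReal.ofReal_le_ofReal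
          rw [← add_div]
          rw [div_le_div_iff_of_pos_right hε0, hCval]
          linarith [hmeas1]
      _ ≤ _ := ENNReal.ofReal_add_le
  have hbm : boundaryMeasure μ C ≤ ENNReal.ofReal d + boundaryMeasure μ (A m) := by
    calc boundaryMeasure μ C
        ≤ liminf (fun ε => ENNReal.ofReal ((h (z + ε) - h z) / ε)
            + ENNReal.ofReal
              (((μ (Metric.thickening ε (A m))).toReal - (μ (A m)).toReal) / ε))
          (nhdsWithin 0 (Set.Ioi 0)) := liminf_le_liminf hpoint
      _ ≤ ENNReal.ofReal d + boundaryMeasure μ (A m) :=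
          liminf_add_le_of_tendsto' ENNReal.ofReal_ne_top hp
  have hfinal : boundaryMeasure μ C ≤ b₁ := by
    calc boundaryMeasure μ C ≤ ENNReal.ofReal d + boundaryMeasure μ (A m) := hbm
      _ ≤ ENNReal.ofReal lam + ENNReal.ofReal τ :=
          add_le_add (ENNReal.ofReal_le_ofReal hdlam) hm1.le
      _ = ENNReal.ofReal (lam + τ) := (ENNReal.ofReal_add hlam0 hτ0.le).symm
      _ ≤ ENNReal.ofReal b₁.toReal := ENNReal.ofReal_le_ofReal (by rw [hlam, hτ]; linarith)
      _ = b₁ := ENNReal.ofReal_toReal hb₁ne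
  exact absurd (hb₁lt.trans_le (hiso.trans hfinal)) (lt_irrefl b₁)
end

section
/- Symmetry of the isoperimetric profile: let (Ω, d, μ) be a metric probability space and define the 1-capacity Cap₁(a,b) for 0 ≤ a ≤ b ≤ 1 as the infimum of ∫|∇Φ| dμ over Lipschitz Φ : Ω → [0,1] with μ{Φ=1} ≥ a and μ{Φ=0} ≥ 1−b. Given that inf_{a≤t≤b} I(t) ≤ Cap₁(a,b) ≤ inf_{a≤t<b} I(t) for all 0 < a < b < 1 and the identity Cap₁(a,b) = Cap₁(1−b,1−a), conclude: if the isoperimetric profile I is lower semi-continuous at t and at 1−t for t ∈ (0,1), then I(t) = I(1−t). -/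
open MeasureTheory Filter

/-- The modulus of the gradient `|∇Φ|(x) = limsup_{y→x} |Φ(y) − Φ(x)|/d(x,y)`. -/
noncomputable def gradMod {Ω : Type*} [PseudoMetricSpace Ω] (f : Ω → ℝ) (x : Ω) : ℝ :=
  limsup (fun y => |f y - f x| / dist y x) (nhdsWithin x {x}ᶜ)

/-- The 1-capacity `Cap₁(a,b)`: the infimum of `∫|∇Φ| dμ` over Lipschitz
`Φ : Ω → [0,1]` with `μ{Φ=1} ≥ a` and `μ{Φ=0} ≥ 1−b`. -/
noncomputable def cap1 {Ω : Type*} [PseudoMetricSpace Ω] [MeasurableSpace Ω]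
    (μ : Measure Ω) (a b : ℝ) : ENNReal :=
  ⨅ (Φ : Ω → ℝ) (_ : ∃ K : NNReal, LipschitzWith K Φ)
    (_ : ∀ x, Φ x ∈ Set.Icc (0 : ℝ) 1)
    (_ : ENNReal.ofReal a ≤ μ {x | Φ x = 1})
    (_ : ENNReal.ofReal (1 - b) ≤ μ {x | Φ x = 0}),
      ∫⁻ x, ENNReal.ofReal (gradMod Φ x) ∂μ

/-- Auxiliary: one inequality direction. -/
theorem profile_symmetry_aux {Ω : Type*} [MetricSpace Ω] [MeasurableSpace Ω] [BorelSpace Ω]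
    (μ : Measure Ω) [IsProbabilityMeasure μ]
    (hsand : ∀ a b : ℝ, 0 < a → a < b → b < 1 →
      (⨅ s ∈ Set.Icc a b, isoProfile μ s) ≤ cap1 μ a b ∧
        cap1 μ a b ≤ ⨅ s ∈ Set.Ico a b, isoProfile μ s)
    (hcapsym : ∀ a b : ℝ, cap1 μ a b = cap1 μ (1 - b) (1 - a))
    (t : ℝ) (ht : t ∈ Set.Ioo (0 : ℝ) 1)
    (hlsc₂ : LowerSemicontinuousAt (fun s => isoProfile μ s) (1 - t)) :
    isoProfile μ (1 - t) ≤ isoProfile μ t := by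
  obtain ⟨ht0, ht1⟩ := ht
  by_contra hlt
  push_neg at hlt
  obtain ⟨c, hc1, hc2⟩ := exists_between hlt
  have hev := hlsc₂ c hc2
  rw [Metric.eventually_nhds_iff] at hev
  obtain ⟨ε, hε, hεc⟩ := hev
  set b : ℝ := t + min ε (1 - t) / 2 with hb
  have hmin : (0:ℝ) < min ε (1 - t) := lt_min hε (by linarith)
  have htb : t < b := by simp only [hb]; linarith
  have hb1 : b < 1 := by
    have : min ε (1 - t) ≤ 1 - t := min_le_right _ _
    simp only [hb]; linarith
  have hbe : b - t < ε := by
    have : min ε (1 - t) ≤ ε := min_le_left _ _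
    simp only [hb]; linarith
  -- c ≤ inf over Icc (1-b) (1-t)
  have h1 : c ≤ ⨅ s ∈ Set.Icc (1 - b) (1 - t), isoProfile μ s := by
    refine le_iInf₂ fun s hs => ?_
    obtain ⟨hs1, hs2⟩ := hs
    refine (hεc (show dist s (1 - t) < ε by
      rw [Real.dist_eq, abs_sub_lt_iff]; constructor <;> linarith)).le
  have hsand1 := (hsand (1 - b) (1 - t) (by linarith) (by linarith) (by linarith)).1
  have hsym : cap1 μ (1 - b) (1 - t) = cap1 μ t b := by
    have := hcapsym (1 - b) (1 - t)
    simpa using this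
  have hsand2 := (hsand t b ht0 htb hb1).2
  have h2 : cap1 μ t b ≤ isoProfile μ t :=
    hsand2.trans (iInf₂_le t ⟨le_refl t, htb⟩)
  have : c ≤ isoProfile μ t := h1.trans (hsand1.trans (hsym.le.trans h2))
  exact absurd this (not_le.mpr hc1)

/-- symmetry of the isoperimetric profile: given the capacity sandwich
`inf_{a≤s≤b} I(s) ≤ Cap₁(a,b) ≤ inf_{a≤s<b} I(s)` for `0 < a < b < 1` and the identity
`Cap₁(a,b) = Cap₁(1−b,1−a)`, if `I` is lower semi-continuous at `t` and `1−t` for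
`t ∈ (0,1)`, then `I(t) = I(1−t)`. -/
theorem profile_symmetry {Ω : Type*} [MetricSpace Ω] [MeasurableSpace Ω] [BorelSpace Ω]
    (μ : Measure Ω) [IsProbabilityMeasure μ]
    (hsand : ∀ a b : ℝ, 0 < a → a < b → b < 1 →
      (⨅ s ∈ Set.Icc a b, isoProfile μ s) ≤ cap1 μ a b ∧
        cap1 μ a b ≤ ⨅ s ∈ Set.Ico a b, isoProfile μ s)
    (hcapsym : ∀ a b : ℝ, cap1 μ a b = cap1 μ (1 - b) (1 - a))
    (t : ℝ) (ht : t ∈ Set.Ioo (0 : ℝ) 1)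
    (hlsc₁ : LowerSemicontinuousAt (fun s => isoProfile μ s) t)
    (hlsc₂ : LowerSemicontinuousAt (fun s => isoProfile μ s) (1 - t)) :
    isoProfile μ t = isoProfile μ (1 - t) := by
  refine le_antisymm ?_ (profile_symmetry_aux μ hsand hcapsym t ht hlsc₂)
  have h := profile_symmetry_aux μ hsand hcapsym (1 - t)
    ⟨by linarith [ht.2], by linarith [ht.1]⟩ (by simpa using hlsc₁)
  simpa using h
end
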